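/- arXiv:2204.08591 — 4 statements merged into one kernel-verified Lean document; each statement's English description precedes it below -/
import Mathlib

section
/- (Lemma 2.17) Let ρ be an alternating 4-form on ℝ⁷, h a symmetric bilinear form and X a vector such that, in components with respect to the standard basis, 2ρ_{ijkl} = Σ_{p=1}^7 ( h_{ip}ψ_{pjkl} + h_{jp}ψ_{ipkl} + h_{kp}ψ_{ijpl} + h_{lp}ψ_{ijkp} ) + X_i φ_{jkl} − X_j φ_{ikl} + X_k φ_{ijl} − X_l φ_{ijk} for all i,j,k,l. Define the 2-tensor ρ̂ by ρ̂_{pq} = Σ_{i,j,k=1}^7 ρ_{pijk} ψ_{qijk}. Then h_{il} = (1/12)(ρ̂_{il} + ρ̂_{li}) − (1/48)(Σ_{m=1}^7 ρ̂_{mm}) δ_{il} for all i,l. -/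
open scoped RealInnerProductSpace

noncomputable section

abbrev E7 : Type := EuclideanSpace ℝ (Fin 7)

/-- The standard orthonormal basis vectors of ℝ⁷. -/
def e7 (i : Fin 7) : E7 := EuclideanSpace.single i 1

/-- Kronecker delta. -/
def kd7 (i j : Fin 7) : ℝ := if i = j then 1 else 0

/-- `e^{abc}(e_i, e_j, e_k)` : component of a wedge of three dual basis covectors. -/
def trip7 (a b c i j k : Fin 7) : ℝ :=
  Matrix.det !![kd7 a i, kd7 a j, kd7 a k;
                kd7 b i, kd7 b j, kd7 b k;
                kd7 c i, kd7 c j, kd7 c k]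

/-- `e^{abcd}(e_i, e_j, e_k, e_l)` : component of a wedge of four dual basis covectors. -/
def quad7 (a b c d i j k l : Fin 7) : ℝ :=
  Matrix.det !![kd7 a i, kd7 a j, kd7 a k, kd7 a l;
                kd7 b i, kd7 b j, kd7 b k, kd7 b l;
                kd7 c i, kd7 c j, kd7 c k, kd7 c l;
                kd7 d i, kd7 d j, kd7 d k, kd7 d l]

/-- Components `φ_{ijk}` of the standard G₂ 3-form
`φ = e¹²³ + e¹⁴⁵ − e¹⁶⁷ + e²⁴⁶ − e²⁷⁵ + e³⁴⁷ − e³⁵⁶` (indices shifted to be 0-based). -/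
def phiC (i j k : Fin 7) : ℝ :=
  trip7 0 1 2 i j k + trip7 0 3 4 i j k - trip7 0 5 6 i j k
  + trip7 1 3 5 i j k - trip7 1 6 4 i j k + trip7 2 3 6 i j k - trip7 2 4 5 i j k

/-- Components `ψ_{ijkl}` of the Hodge dual 4-form
`ψ = e⁴⁵⁶⁷ − e²³⁴⁵ + e²³⁶⁷ − e³¹⁴⁶ + e³¹⁷⁵ − e¹²⁴⁷ + e¹²⁵⁶` (0-based). -/
def psiC (i j k l : Fin 7) : ℝ :=
  quad7 3 4 5 6 i j k l - quad7 1 2 3 4 i j k l + quad7 1 2 5 6 i j k l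
  - quad7 2 0 3 5 i j k l + quad7 2 0 6 4 i j k l
  - quad7 0 1 3 6 i j k l + quad7 0 1 4 5 i j k l

/-- The standard G₂ 3-form evaluated on arbitrary vectors. -/
def phi7 (x y z : E7) : ℝ := ∑ i, ∑ j, ∑ k, x i * y j * z k * phiC i j k

/-- The 4-form ψ evaluated on arbitrary vectors. -/
def psi7 (x y z w : E7) : ℝ :=
  ∑ i, ∑ j, ∑ k, ∑ l, x i * y j * z k * w l * psiC i j k l

/-- The cross product on ℝ⁷, characterized by `⟨x × y, z⟩ = φ(x,y,z)`. -/
def cross7 (x y : E7) : E7 := (WithLp.equiv 2 (Fin 7 → ℝ)).symm fun k => phi7 x y (e7 k)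

/-- The vector-valued 3-form χ, characterized by `⟨χ(x,y,z), w⟩ = ψ(x,y,z,w)`. -/
def chi7 (x y z : E7) : E7 := (WithLp.equiv 2 (Fin 7 → ℝ)).symm fun l => psi7 x y z (e7 l)

/-- `ρ̂_{pq} = Σ_{i,j,k} ρ_{pijk} ψ_{qijk}`. -/
def rhoHat (ρ : AlternatingMap ℝ E7 ℝ (Fin 4)) (p q : Fin 7) : ℝ :=
  ∑ i, ∑ j, ∑ k, ρ ![e7 p, e7 i, e7 j, e7 k] * psiC q i j k


namespace G2Aux

set_option maxRecDepth 80000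
set_option maxHeartbeats 4000000
set_option exponentiation.threshold 3000

/-- Kronecker delta over ℤ. -/
def kz (i j : Fin 7) : ℤ := if i = j then 1 else 0

/-- explicit 3×3 determinant of deltas -/
def tripZ (a b c i j k : Fin 7) : ℤ :=
  kz a i * (kz b j * kz c k - kz b k * kz c j)
  - kz a j * (kz b i * kz c k - kz b k * kz c i)
  + kz a k * (kz b i * kz c j - kz b j * kz c i)

/-- explicit 4×4 determinant of deltas -/
def quadZ (a b c d i j k l : Fin 7) : ℤ :=
  kz a i * tripZ b c d j k l - kz a j * tripZ b c d i k l
  + kz a k * tripZ b c d i j l - kz a l * tripZ b c d i j k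

def phiZ (i j k : Fin 7) : ℤ :=
  tripZ 0 1 2 i j k + tripZ 0 3 4 i j k - tripZ 0 5 6 i j k
  + tripZ 1 3 5 i j k - tripZ 1 6 4 i j k + tripZ 2 3 6 i j k - tripZ 2 4 5 i j k

def psiZ (i j k l : Fin 7) : ℤ :=
  quadZ 3 4 5 6 i j k l - quadZ 1 2 3 4 i j k l + quadZ 1 2 5 6 i j k l
  - quadZ 2 0 3 5 i j k l + quadZ 2 0 6 4 i j k l
  - quadZ 0 1 3 6 i j k l + quadZ 0 1 4 5 i j k l

def psiN : Nat := 1849705492897158801491066148326437323115509425311703646667593403472163546393502328396656748044066013279694424189514543891718105478069401407088458625753156817182168247597778910027309565571267473639747859583561338292041282172311974015643552803140392747592271159403625419429711807806483624126369830664784510508322300094362446309209604408936084946038332802210015519629725030867198372057763679510685603474156495058830435719124224823544798152153566034676414048430261917548911041522616719238307400938987291311194546875402376920708770437397498808066502732827744527129355796854576369456573343260639912833204287585586602452397544383972406778528783243448848772001310529346713011172025013365919273800490909859063263373416382705188690612182363009209220128842593871775952477892809402890406269015934710777587809668865150441385816808103199987276006957981661006839770944298569279931603469079641581558193141753140681551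16506146080565823357728218754142463678546923460823061672422392617949479128853939523327470604970693121779392207092910872648665679117865461442250578029949057600858340436057855335821225681684149180742439501965297490351679716777114520761495005960001
def phiN : Nat := 22467800270971312782299290298973327886138912408713162420070707649703474523774108846933611513202270243391032016985399484863194027609886069988604800476486082041905573
def psiT (i j k l : Fin 7) : ℤ := (((psiN / 3 ^ (((i.val * 7 + j.val) * 7 + k.val) * 7 + l.val)) % 3 : Nat) : ℤ) - 1
def phiT (i j k : Fin 7) : ℤ := (((phiN / 3 ^ ((i.val * 7 + j.val) * 7 + k.val)) % 3 : Nat) : ℤ) - 1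


/-- explicit 7-fold sum over ℤ -/
def s7 (f : Fin 7 → ℤ) : ℤ := f 0 + f 1 + f 2 + f 3 + f 4 + f 5 + f 6

lemma dPsiT : ∀ i j k l : Fin 7, psiZ i j k l = psiT i j k l := by decide
lemma dPhiT : ∀ i j k : Fin 7, phiZ i j k = phiT i j k := by decide

lemma dZ1 : ∀ m q : Fin 7,
    (s7 fun i => s7 fun j => s7 fun k => psiT m i j k * psiT q i j k) = 24 * kz m q := by decide

lemma dZ0 : ∀ q : Fin 7,
    (s7 fun i => s7 fun j => s7 fun k => phiT i j k * psiT q i j k) = 0 := by decide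

lemma dZ2 : ∀ p q i m : Fin 7,
    (s7 fun j => s7 fun k => psiT p m j k * psiT q i j k)
      = 4 * kz p q * kz m i - 4 * kz p i * kz m q - 2 * psiT p m q i := by decide

lemma dZ3 : ∀ p q j m : Fin 7,
    (s7 fun i => s7 fun k => psiT p i m k * psiT q i j k)
      = 4 * kz p q * kz m j - 4 * kz p j * kz m q - 2 * psiT p m q j := by decide

lemma dZ4 : ∀ p q k m : Fin 7,
    (s7 fun i => s7 fun j => psiT p i j m * psiT q i j k)
      = 4 * kz p q * kz m k - 4 * kz p k * kz m q - 2 * psiT p m q k := by decide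

lemma dP2 : ∀ p q a : Fin 7,
    (s7 fun j => s7 fun k => phiT p j k * psiT q a j k) = -4 * phiT p q a := by decide

lemma dP3 : ∀ p q a : Fin 7,
    (s7 fun i => s7 fun k => phiT p i k * psiT q i a k) = 4 * phiT p q a := by decide

lemma dP4 : ∀ p q a : Fin 7,
    (s7 fun i => s7 fun j => phiT p i j * psiT q i j a) = -4 * phiT p q a := by decide

lemma dAsym : ∀ p m q i : Fin 7, psiT p m q i = - psiT p i q m := by decide
lemma dPhiAsym : ∀ p q a : Fin 7, phiT p q a = - phiT q p a := by decide
lemma dPhiDiag : ∀ m a : Fin 7, phiT m m a = 0 := by decide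

/-! ### casting the components to the ℤ-valued tables -/

lemma kz_cast (i j : Fin 7) : ((kz i j : ℤ) : ℝ) = kd7 i j := by
  simp [kz, kd7, apply_ite]

lemma trip7_cast (a b c i j k : Fin 7) :
    trip7 a b c i j k = ((tripZ a b c i j k : ℤ) : ℝ) := by
  simp [trip7, Matrix.det_fin_three]
  simp only [tripZ]
  push_cast [kz_cast]
  ring

lemma quad7_cast (a b c d i j k l : Fin 7) :
    quad7 a b c d i j k l = ((quadZ a b c d i j k l : ℤ) : ℝ) := by
  simp only [quad7]
  rw [Matrix.det_succ_row_zero]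
  simp +decide [Fin.sum_univ_four, Matrix.submatrix_apply, Matrix.det_fin_three, Fin.succAbove,
    show (Fin.castSucc 2 : Fin 4) = 2 from rfl, show (Fin.succ 2 : Fin 4) = 3 from rfl,
    show (Fin.castSucc 1 : Fin 4) = 1 from rfl, show (Fin.succ 1 : Fin 4) = 2 from rfl,
    show (Fin.castSucc 0 : Fin 4) = 0 from rfl, show (Fin.succ 0 : Fin 4) = 1 from rfl]
  simp only [quadZ, tripZ]
  push_cast [kz_cast]
  ring

lemma psiC_cast (i j k l : Fin 7) : psiC i j k l = ((psiT i j k l : ℤ) : ℝ) := by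
  rw [← dPsiT]
  simp only [psiC, psiZ, quad7_cast]
  push_cast
  ring

lemma phiC_cast (i j k : Fin 7) : phiC i j k = ((phiT i j k : ℤ) : ℝ) := by
  rw [← dPhiT]
  simp only [phiC, phiZ, trip7_cast]
  push_cast
  ring

/-! ### bridging ℤ sums to ℝ sums -/

lemma sum_eq_s7 (f : Fin 7 → ℤ) : (∑ x, f x) = s7 f := by
  simp [s7, Fin.sum_univ_seven]

lemma R1 (m q : Fin 7) :
    (∑ i, ∑ j, ∑ k, (psiT m i j k : ℝ) * (psiT q i j k : ℝ)) = 24 * kd7 m q := by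
  have h0 : (∑ i, ∑ j, ∑ k, psiT m i j k * psiT q i j k : ℤ) = 24 * kz m q := by
    simp only [sum_eq_s7]; exact dZ1 m q
  have h1 := congrArg (fun z : ℤ => (z : ℝ)) h0
  push_cast [kz_cast] at h1
  exact h1

lemma R0 (q : Fin 7) :
    (∑ i, ∑ j, ∑ k, (phiT i j k : ℝ) * (psiT q i j k : ℝ)) = 0 := by
  have h0 : (∑ i, ∑ j, ∑ k, phiT i j k * psiT q i j k : ℤ) = 0 := by
    simp only [sum_eq_s7]; exact dZ0 q
  have h1 := congrArg (fun z : ℤ => (z : ℝ)) h0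
  push_cast at h1
  exact h1

lemma R2 (p q i m : Fin 7) :
    (∑ j, ∑ k, (psiT p m j k : ℝ) * (psiT q i j k : ℝ))
      = 4 * kd7 p q * kd7 m i - 4 * kd7 p i * kd7 m q - 2 * (psiT p m q i : ℝ) := by
  have h0 : (∑ j, ∑ k, psiT p m j k * psiT q i j k : ℤ)
      = 4 * kz p q * kz m i - 4 * kz p i * kz m q - 2 * psiT p m q i := by
    simp only [sum_eq_s7]; exact dZ2 p q i m
  have h1 := congrArg (fun z : ℤ => (z : ℝ)) h0
  push_cast [kz_cast] at h1
  exact h1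

lemma R3 (p q j m : Fin 7) :
    (∑ i, ∑ k, (psiT p i m k : ℝ) * (psiT q i j k : ℝ))
      = 4 * kd7 p q * kd7 m j - 4 * kd7 p j * kd7 m q - 2 * (psiT p m q j : ℝ) := by
  have h0 : (∑ i, ∑ k, psiT p i m k * psiT q i j k : ℤ)
      = 4 * kz p q * kz m j - 4 * kz p j * kz m q - 2 * psiT p m q j := by
    simp only [sum_eq_s7]; exact dZ3 p q j m
  have h1 := congrArg (fun z : ℤ => (z : ℝ)) h0
  push_cast [kz_cast] at h1
  exact h1

lemma R4 (p q k m : Fin 7) :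
    (∑ i, ∑ j, (psiT p i j m : ℝ) * (psiT q i j k : ℝ))
      = 4 * kd7 p q * kd7 m k - 4 * kd7 p k * kd7 m q - 2 * (psiT p m q k : ℝ) := by
  have h0 : (∑ i, ∑ j, psiT p i j m * psiT q i j k : ℤ)
      = 4 * kz p q * kz m k - 4 * kz p k * kz m q - 2 * psiT p m q k := by
    simp only [sum_eq_s7]; exact dZ4 p q k m
  have h1 := congrArg (fun z : ℤ => (z : ℝ)) h0
  push_cast [kz_cast] at h1
  exact h1

lemma RP2 (p q a : Fin 7) :
    (∑ j, ∑ k, (phiT p j k : ℝ) * (psiT q a j k : ℝ)) = -4 * (phiT p q a : ℝ) := by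
  have h0 : (∑ j, ∑ k, phiT p j k * psiT q a j k : ℤ) = -4 * phiT p q a := by
    simp only [sum_eq_s7]; exact dP2 p q a
  have h1 := congrArg (fun z : ℤ => (z : ℝ)) h0
  push_cast at h1
  exact h1

lemma RP3 (p q a : Fin 7) :
    (∑ i, ∑ k, (phiT p i k : ℝ) * (psiT q i a k : ℝ)) = 4 * (phiT p q a : ℝ) := by
  have h0 : (∑ i, ∑ k, phiT p i k * psiT q i a k : ℤ) = 4 * phiT p q a := by
    simp only [sum_eq_s7]; exact dP3 p q a
  have h1 := congrArg (fun z : ℤ => (z : ℝ)) h0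
  push_cast at h1
  exact h1

lemma RP4 (p q a : Fin 7) :
    (∑ i, ∑ j, (phiT p i j : ℝ) * (psiT q i j a : ℝ)) = -4 * (phiT p q a : ℝ) := by
  have h0 : (∑ i, ∑ j, phiT p i j * psiT q i j a : ℤ) = -4 * phiT p q a := by
    simp only [sum_eq_s7]; exact dP4 p q a
  have h1 := congrArg (fun z : ℤ => (z : ℝ)) h0
  push_cast at h1
  exact h1

lemma RAsym (p m q i : Fin 7) : (psiT p m q i : ℝ) = -(psiT p i q m : ℝ) := by
  have := congrArg (fun z : ℤ => (z : ℝ)) (dAsym p m q i)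
  push_cast at this; exact this

lemma RPhiAsym (p q a : Fin 7) : (phiT p q a : ℝ) = -(phiT q p a : ℝ) := by
  have := congrArg (fun z : ℤ => (z : ℝ)) (dPhiAsym p q a)
  push_cast at this; exact this

lemma RPhiDiag (m a : Fin 7) : (phiT m m a : ℝ) = 0 := by
  rw [dPhiDiag m a]; norm_num

/-! ### sum gymnastics helpers -/

lemma sum_comm3 (f : Fin 7 → Fin 7 → Fin 7 → ℝ) :
    (∑ a, ∑ b, ∑ c, f a b c) = ∑ c, ∑ a, ∑ b, f a b c := by
  calc (∑ a, ∑ b, ∑ c, f a b c)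
      = ∑ a, ∑ c, ∑ b, f a b c :=
        Finset.sum_congr rfl fun a _ => Finset.sum_comm
    _ = ∑ c, ∑ a, ∑ b, f a b c := Finset.sum_comm

lemma sum_comm4a (f : Fin 7 → Fin 7 → Fin 7 → Fin 7 → ℝ) :
    (∑ i, ∑ j, ∑ k, ∑ m, f i j k m) = ∑ m, ∑ i, ∑ j, ∑ k, f i j k m := by
  calc (∑ i, ∑ j, ∑ k, ∑ m, f i j k m)
      = ∑ i, ∑ m, ∑ j, ∑ k, f i j k m :=
        Finset.sum_congr rfl fun i _ => sum_comm3 _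
    _ = ∑ m, ∑ i, ∑ j, ∑ k, f i j k m := Finset.sum_comm

lemma sum_kd_mul (q : Fin 7) (f : Fin 7 → ℝ) : (∑ m, kd7 m q * f m) = f q := by
  simp [kd7, ite_mul]

lemma sum_kd_mul' (q : Fin 7) (f : Fin 7 → ℝ) : (∑ m, kd7 q m * f m) = f q := by
  simp [kd7, ite_mul]


/-! ### the four h-pieces and four X-pieces -/

lemma piece1 (h : E7 →ₗ[ℝ] E7 →ₗ[ℝ] ℝ) (p q : Fin 7) :
    (∑ i, ∑ j, ∑ k, (∑ m, h (e7 p) (e7 m) * (psiT m i j k : ℝ)) * (psiT q i j k : ℝ))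
      = 24 * h (e7 p) (e7 q) := by
  calc (∑ i, ∑ j, ∑ k, (∑ m, h (e7 p) (e7 m) * (psiT m i j k : ℝ)) * (psiT q i j k : ℝ))
      = ∑ i, ∑ j, ∑ k, ∑ m, h (e7 p) (e7 m) * ((psiT m i j k : ℝ) * (psiT q i j k : ℝ)) := by
        simp only [Finset.sum_mul, mul_assoc]
    _ = ∑ m, ∑ i, ∑ j, ∑ k, h (e7 p) (e7 m) * ((psiT m i j k : ℝ) * (psiT q i j k : ℝ)) :=
        sum_comm4a _
    _ = ∑ m, h (e7 p) (e7 m) * (∑ i, ∑ j, ∑ k, (psiT m i j k : ℝ) * (psiT q i j k : ℝ)) := by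
        simp only [← Finset.mul_sum]
    _ = ∑ m, h (e7 p) (e7 m) * (24 * kd7 m q) := by simp only [R1]
    _ = ∑ m, kd7 m q * (24 * h (e7 p) (e7 m)) := Finset.sum_congr rfl fun m _ => by ring
    _ = 24 * h (e7 p) (e7 q) := sum_kd_mul q _

lemma hzero (h : E7 →ₗ[ℝ] E7 →ₗ[ℝ] ℝ) (hsymm : ∀ x y : E7, h x y = h y x) (p q : Fin 7) :
    (∑ i, ∑ m, h (e7 i) (e7 m) * (psiT p m q i : ℝ)) = 0 := by
  have hneg : (∑ i, ∑ m, h (e7 i) (e7 m) * (psiT p m q i : ℝ))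
      = -(∑ i, ∑ m, h (e7 i) (e7 m) * (psiT p m q i : ℝ)) := by
    calc (∑ i, ∑ m, h (e7 i) (e7 m) * (psiT p m q i : ℝ))
        = ∑ m, ∑ i, h (e7 i) (e7 m) * (psiT p m q i : ℝ) := Finset.sum_comm
      _ = ∑ m, ∑ i, -(h (e7 m) (e7 i) * (psiT p i q m : ℝ)) := by
          refine Finset.sum_congr rfl fun m _ => Finset.sum_congr rfl fun i _ => ?_
          rw [hsymm (e7 i) (e7 m), RAsym]; ring
      _ = -(∑ m, ∑ i, h (e7 m) (e7 i) * (psiT p i q m : ℝ)) := by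
          simp only [Finset.sum_neg_distrib]
      _ = -(∑ i, ∑ m, h (e7 i) (e7 m) * (psiT p m q i : ℝ)) := rfl
  linarith

lemma piece2 (h : E7 →ₗ[ℝ] E7 →ₗ[ℝ] ℝ) (p q : Fin 7) :
    (∑ i, ∑ j, ∑ k, (∑ m, h (e7 i) (e7 m) * (psiT p m j k : ℝ)) * (psiT q i j k : ℝ))
      = 4 * kd7 p q * (∑ m, h (e7 m) (e7 m)) - 4 * h (e7 p) (e7 q)
        - 2 * (∑ i, ∑ m, h (e7 i) (e7 m) * (psiT p m q i : ℝ)) := by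
  calc (∑ i, ∑ j, ∑ k, (∑ m, h (e7 i) (e7 m) * (psiT p m j k : ℝ)) * (psiT q i j k : ℝ))
      = ∑ i, ∑ j, ∑ k, ∑ m, h (e7 i) (e7 m) * ((psiT p m j k : ℝ) * (psiT q i j k : ℝ)) := by
        simp only [Finset.sum_mul, mul_assoc]
    _ = ∑ i, ∑ m, ∑ j, ∑ k, h (e7 i) (e7 m) * ((psiT p m j k : ℝ) * (psiT q i j k : ℝ)) :=
        Finset.sum_congr rfl fun i _ => sum_comm3 _
    _ = ∑ i, ∑ m, h (e7 i) (e7 m) * (∑ j, ∑ k, (psiT p m j k : ℝ) * (psiT q i j k : ℝ)) := by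
        simp only [← Finset.mul_sum]
    _ = ∑ i, ∑ m, h (e7 i) (e7 m)
          * (4 * kd7 p q * kd7 m i - 4 * kd7 p i * kd7 m q - 2 * (psiT p m q i : ℝ)) := by
        simp only [R2]
    _ = ∑ i, (∑ m, kd7 m i * (4 * kd7 p q * h (e7 i) (e7 m))
          - ∑ m, kd7 m q * (4 * kd7 p i * h (e7 i) (e7 m))
          - ∑ m, 2 * (h (e7 i) (e7 m) * (psiT p m q i : ℝ))) := by
        refine Finset.sum_congr rfl fun i _ => ?_
        rw [← Finset.sum_sub_distrib, ← Finset.sum_sub_distrib]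
        exact Finset.sum_congr rfl fun m _ => by ring
    _ = ∑ i, (kd7 p q * (4 * h (e7 i) (e7 i)) - kd7 p i * (4 * h (e7 i) (e7 q))
          - 2 * ∑ m, h (e7 i) (e7 m) * (psiT p m q i : ℝ)) := by
        refine Finset.sum_congr rfl fun i _ => ?_
        rw [sum_kd_mul i _, sum_kd_mul q _, ← Finset.mul_sum]
        ring
    _ = 4 * kd7 p q * (∑ m, h (e7 m) (e7 m)) - 4 * h (e7 p) (e7 q)
        - 2 * (∑ i, ∑ m, h (e7 i) (e7 m) * (psiT p m q i : ℝ)) := by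
        rw [Finset.sum_sub_distrib, Finset.sum_sub_distrib]
        rw [show (∑ i, kd7 p i * (4 * h (e7 i) (e7 q))) = 4 * h (e7 p) (e7 q) from
          sum_kd_mul' p _]
        simp only [← Finset.mul_sum]
        ring

lemma piece3 (h : E7 →ₗ[ℝ] E7 →ₗ[ℝ] ℝ) (p q : Fin 7) :
    (∑ i, ∑ j, ∑ k, (∑ m, h (e7 j) (e7 m) * (psiT p i m k : ℝ)) * (psiT q i j k : ℝ))
      = 4 * kd7 p q * (∑ m, h (e7 m) (e7 m)) - 4 * h (e7 p) (e7 q)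
        - 2 * (∑ j, ∑ m, h (e7 j) (e7 m) * (psiT p m q j : ℝ)) := by
  calc (∑ i, ∑ j, ∑ k, (∑ m, h (e7 j) (e7 m) * (psiT p i m k : ℝ)) * (psiT q i j k : ℝ))
      = ∑ i, ∑ j, ∑ k, ∑ m, h (e7 j) (e7 m) * ((psiT p i m k : ℝ) * (psiT q i j k : ℝ)) := by
        simp only [Finset.sum_mul, mul_assoc]
    _ = ∑ j, ∑ i, ∑ k, ∑ m, h (e7 j) (e7 m) * ((psiT p i m k : ℝ) * (psiT q i j k : ℝ)) :=
        Finset.sum_comm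
    _ = ∑ j, ∑ m, ∑ i, ∑ k, h (e7 j) (e7 m) * ((psiT p i m k : ℝ) * (psiT q i j k : ℝ)) :=
        Finset.sum_congr rfl fun j _ => sum_comm3 _
    _ = ∑ j, ∑ m, h (e7 j) (e7 m) * (∑ i, ∑ k, (psiT p i m k : ℝ) * (psiT q i j k : ℝ)) := by
        simp only [← Finset.mul_sum]
    _ = ∑ j, ∑ m, h (e7 j) (e7 m)
          * (4 * kd7 p q * kd7 m j - 4 * kd7 p j * kd7 m q - 2 * (psiT p m q j : ℝ)) := by
        simp only [R3]
    _ = ∑ j, (∑ m, kd7 m j * (4 * kd7 p q * h (e7 j) (e7 m))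
          - ∑ m, kd7 m q * (4 * kd7 p j * h (e7 j) (e7 m))
          - ∑ m, 2 * (h (e7 j) (e7 m) * (psiT p m q j : ℝ))) := by
        refine Finset.sum_congr rfl fun j _ => ?_
        rw [← Finset.sum_sub_distrib, ← Finset.sum_sub_distrib]
        exact Finset.sum_congr rfl fun m _ => by ring
    _ = ∑ j, (kd7 p q * (4 * h (e7 j) (e7 j)) - kd7 p j * (4 * h (e7 j) (e7 q))
          - 2 * ∑ m, h (e7 j) (e7 m) * (psiT p m q j : ℝ)) := by
        refine Finset.sum_congr rfl fun j _ => ?_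
        rw [sum_kd_mul j _, sum_kd_mul q _, ← Finset.mul_sum]
        ring
    _ = 4 * kd7 p q * (∑ m, h (e7 m) (e7 m)) - 4 * h (e7 p) (e7 q)
        - 2 * (∑ j, ∑ m, h (e7 j) (e7 m) * (psiT p m q j : ℝ)) := by
        rw [Finset.sum_sub_distrib, Finset.sum_sub_distrib]
        rw [show (∑ j, kd7 p j * (4 * h (e7 j) (e7 q))) = 4 * h (e7 p) (e7 q) from
          sum_kd_mul' p _]
        simp only [← Finset.mul_sum]
        ring

lemma piece4 (h : E7 →ₗ[ℝ] E7 →ₗ[ℝ] ℝ) (p q : Fin 7) :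
    (∑ i, ∑ j, ∑ k, (∑ m, h (e7 k) (e7 m) * (psiT p i j m : ℝ)) * (psiT q i j k : ℝ))
      = 4 * kd7 p q * (∑ m, h (e7 m) (e7 m)) - 4 * h (e7 p) (e7 q)
        - 2 * (∑ k, ∑ m, h (e7 k) (e7 m) * (psiT p m q k : ℝ)) := by
  calc (∑ i, ∑ j, ∑ k, (∑ m, h (e7 k) (e7 m) * (psiT p i j m : ℝ)) * (psiT q i j k : ℝ))
      = ∑ i, ∑ j, ∑ k, ∑ m, h (e7 k) (e7 m) * ((psiT p i j m : ℝ) * (psiT q i j k : ℝ)) := by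
        simp only [Finset.sum_mul, mul_assoc]
    _ = ∑ k, ∑ i, ∑ j, ∑ m, h (e7 k) (e7 m) * ((psiT p i j m : ℝ) * (psiT q i j k : ℝ)) :=
        sum_comm3 _
    _ = ∑ k, ∑ m, ∑ i, ∑ j, h (e7 k) (e7 m) * ((psiT p i j m : ℝ) * (psiT q i j k : ℝ)) :=
        Finset.sum_congr rfl fun k _ => sum_comm3 _
    _ = ∑ k, ∑ m, h (e7 k) (e7 m) * (∑ i, ∑ j, (psiT p i j m : ℝ) * (psiT q i j k : ℝ)) := by
        simp only [← Finset.mul_sum]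
    _ = ∑ k, ∑ m, h (e7 k) (e7 m)
          * (4 * kd7 p q * kd7 m k - 4 * kd7 p k * kd7 m q - 2 * (psiT p m q k : ℝ)) := by
        simp only [R4]
    _ = ∑ k, (∑ m, kd7 m k * (4 * kd7 p q * h (e7 k) (e7 m))
          - ∑ m, kd7 m q * (4 * kd7 p k * h (e7 k) (e7 m))
          - ∑ m, 2 * (h (e7 k) (e7 m) * (psiT p m q k : ℝ))) := by
        refine Finset.sum_congr rfl fun k _ => ?_
        rw [← Finset.sum_sub_distrib, ← Finset.sum_sub_distrib]
        exact Finset.sum_congr rfl fun m _ => by ring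
    _ = ∑ k, (kd7 p q * (4 * h (e7 k) (e7 k)) - kd7 p k * (4 * h (e7 k) (e7 q))
          - 2 * ∑ m, h (e7 k) (e7 m) * (psiT p m q k : ℝ)) := by
        refine Finset.sum_congr rfl fun k _ => ?_
        rw [sum_kd_mul k _, sum_kd_mul q _, ← Finset.mul_sum]
        ring
    _ = 4 * kd7 p q * (∑ m, h (e7 m) (e7 m)) - 4 * h (e7 p) (e7 q)
        - 2 * (∑ k, ∑ m, h (e7 k) (e7 m) * (psiT p m q k : ℝ)) := by
        rw [Finset.sum_sub_distrib, Finset.sum_sub_distrib]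
        rw [show (∑ k, kd7 p k * (4 * h (e7 k) (e7 q))) = 4 * h (e7 p) (e7 q) from
          sum_kd_mul' p _]
        simp only [← Finset.mul_sum]
        ring

lemma pieceX1 (X : E7) (p q : Fin 7) :
    (∑ i, ∑ j, ∑ k, (X p * (phiT i j k : ℝ)) * (psiT q i j k : ℝ)) = 0 := by
  calc (∑ i, ∑ j, ∑ k, (X p * (phiT i j k : ℝ)) * (psiT q i j k : ℝ))
      = ∑ i, ∑ j, ∑ k, X p * ((phiT i j k : ℝ) * (psiT q i j k : ℝ)) := by
        simp only [mul_assoc]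
    _ = X p * (∑ i, ∑ j, ∑ k, (phiT i j k : ℝ) * (psiT q i j k : ℝ)) := by
        simp only [← Finset.mul_sum]
    _ = 0 := by rw [R0]; ring

lemma pieceX2 (X : E7) (p q : Fin 7) :
    (∑ i, ∑ j, ∑ k, (X i * (phiT p j k : ℝ)) * (psiT q i j k : ℝ))
      = -4 * (∑ a, X a * (phiT p q a : ℝ)) := by
  calc (∑ i, ∑ j, ∑ k, (X i * (phiT p j k : ℝ)) * (psiT q i j k : ℝ))
      = ∑ i, X i * (∑ j, ∑ k, (phiT p j k : ℝ) * (psiT q i j k : ℝ)) := by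
        simp only [mul_assoc, ← Finset.mul_sum]
    _ = ∑ i, X i * (-4 * (phiT p q i : ℝ)) := by simp only [RP2]
    _ = -4 * (∑ a, X a * (phiT p q a : ℝ)) := by
        rw [Finset.mul_sum]; exact Finset.sum_congr rfl fun a _ => by ring

lemma pieceX3 (X : E7) (p q : Fin 7) :
    (∑ i, ∑ j, ∑ k, (X j * (phiT p i k : ℝ)) * (psiT q i j k : ℝ))
      = 4 * (∑ a, X a * (phiT p q a : ℝ)) := by
  calc (∑ i, ∑ j, ∑ k, (X j * (phiT p i k : ℝ)) * (psiT q i j k : ℝ))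
      = ∑ j, ∑ i, ∑ k, (X j * (phiT p i k : ℝ)) * (psiT q i j k : ℝ) := Finset.sum_comm
    _ = ∑ j, X j * (∑ i, ∑ k, (phiT p i k : ℝ) * (psiT q i j k : ℝ)) := by
        simp only [mul_assoc, ← Finset.mul_sum]
    _ = ∑ j, X j * (4 * (phiT p q j : ℝ)) := by simp only [RP3]
    _ = 4 * (∑ a, X a * (phiT p q a : ℝ)) := by
        rw [Finset.mul_sum]; exact Finset.sum_congr rfl fun a _ => by ring

lemma pieceX4 (X : E7) (p q : Fin 7) :
    (∑ i, ∑ j, ∑ k, (X k * (phiT p i j : ℝ)) * (psiT q i j k : ℝ))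
      = -4 * (∑ a, X a * (phiT p q a : ℝ)) := by
  calc (∑ i, ∑ j, ∑ k, (X k * (phiT p i j : ℝ)) * (psiT q i j k : ℝ))
      = ∑ k, ∑ i, ∑ j, (X k * (phiT p i j : ℝ)) * (psiT q i j k : ℝ) := sum_comm3 _
    _ = ∑ k, X k * (∑ i, ∑ j, (phiT p i j : ℝ) * (psiT q i j k : ℝ)) := by
        simp only [mul_assoc, ← Finset.mul_sum]
    _ = ∑ k, X k * (-4 * (phiT p q k : ℝ)) := by simp only [RP4]
    _ = -4 * (∑ a, X a * (phiT p q a : ℝ)) := by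
        rw [Finset.mul_sum]; exact Finset.sum_congr rfl fun a _ => by ring


/-! ### main computation -/

lemma two_rho (ρ : AlternatingMap ℝ E7 ℝ (Fin 4))
    (h : E7 →ₗ[ℝ] E7 →ₗ[ℝ] ℝ) (hsymm : ∀ x y : E7, h x y = h y x) (X : E7)
    (heq : ∀ i j k l : Fin 7,
      2 * ρ ![e7 i, e7 j, e7 k, e7 l] =
        (∑ p, (h (e7 i) (e7 p) * psiC p j k l + h (e7 j) (e7 p) * psiC i p k l
               + h (e7 k) (e7 p) * psiC i j p l + h (e7 l) (e7 p) * psiC i j k p))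
        + X i * phiC j k l - X j * phiC i k l + X k * phiC i j l - X l * phiC i j k)
    (p q : Fin 7) :
    2 * rhoHat ρ p q = 12 * h (e7 p) (e7 q)
      + 12 * kd7 p q * (∑ m, h (e7 m) (e7 m))
      + 12 * (∑ a, X a * (phiT p q a : ℝ)) := by
  have heq' : ∀ p i j k : Fin 7, 2 * ρ ![e7 p, e7 i, e7 j, e7 k] =
      (∑ m, (h (e7 p) (e7 m) * (psiT m i j k : ℝ) + h (e7 i) (e7 m) * (psiT p m j k : ℝ)
             + h (e7 j) (e7 m) * (psiT p i m k : ℝ) + h (e7 k) (e7 m) * (psiT p i j m : ℝ)))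
      + X p * (phiT i j k : ℝ) - X i * (phiT p j k : ℝ)
      + X j * (phiT p i k : ℝ) - X k * (phiT p i j : ℝ) := by
    intro p i j k
    rw [heq p i j k]
    simp only [psiC_cast, phiC_cast]
  have step1 : 2 * rhoHat ρ p q
      = ∑ i, ∑ j, ∑ k, (2 * ρ ![e7 p, e7 i, e7 j, e7 k]) * (psiT q i j k : ℝ) := by
    rw [rhoHat, Finset.mul_sum]
    refine Finset.sum_congr rfl fun i _ => ?_
    rw [Finset.mul_sum]
    refine Finset.sum_congr rfl fun j _ => ?_
    rw [Finset.mul_sum]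
    refine Finset.sum_congr rfl fun k _ => ?_
    rw [psiC_cast]; ring
  rw [step1]
  have step2 : (∑ i, ∑ j, ∑ k, (2 * ρ ![e7 p, e7 i, e7 j, e7 k]) * (psiT q i j k : ℝ))
      = ∑ i, ∑ j, ∑ k,
          ((∑ m, h (e7 p) (e7 m) * (psiT m i j k : ℝ)) * (psiT q i j k : ℝ)
          + (∑ m, h (e7 i) (e7 m) * (psiT p m j k : ℝ)) * (psiT q i j k : ℝ)
          + (∑ m, h (e7 j) (e7 m) * (psiT p i m k : ℝ)) * (psiT q i j k : ℝ)
          + (∑ m, h (e7 k) (e7 m) * (psiT p i j m : ℝ)) * (psiT q i j k : ℝ)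
          + (X p * (phiT i j k : ℝ)) * (psiT q i j k : ℝ)
          - (X i * (phiT p j k : ℝ)) * (psiT q i j k : ℝ)
          + (X j * (phiT p i k : ℝ)) * (psiT q i j k : ℝ)
          - (X k * (phiT p i j : ℝ)) * (psiT q i j k : ℝ)) := by
    refine Finset.sum_congr rfl fun i _ => Finset.sum_congr rfl fun j _ =>
      Finset.sum_congr rfl fun k _ => ?_
    rw [heq' p i j k]
    simp only [Finset.sum_add_distrib]
    ring
  rw [step2]
  simp only [Finset.sum_add_distrib, Finset.sum_sub_distrib]
  rw [piece1 h p q, piece2 h p q, piece3 h p q, piece4 h p q,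
    pieceX1 X p q, pieceX2 X p q, pieceX3 X p q, pieceX4 X p q,
    hzero h hsymm p q]
  ring


end G2Aux

/-- Lemma 2.17: recovering the symmetric tensor `h` from the 4-form
`2ρ = h ⋄ ψ + X ∧ φ` via the contraction `ρ̂`. -/
theorem lemma_2_17 (ρ : AlternatingMap ℝ E7 ℝ (Fin 4))
    (h : E7 →ₗ[ℝ] E7 →ₗ[ℝ] ℝ) (hsymm : ∀ x y : E7, h x y = h y x) (X : E7)
    (heq : ∀ i j k l : Fin 7,
      2 * ρ ![e7 i, e7 j, e7 k, e7 l] =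
        (∑ p, (h (e7 i) (e7 p) * psiC p j k l + h (e7 j) (e7 p) * psiC i p k l
               + h (e7 k) (e7 p) * psiC i j p l + h (e7 l) (e7 p) * psiC i j k p))
        + X i * phiC j k l - X j * phiC i k l + X k * phiC i j l - X l * phiC i j k) :
    ∀ i l : Fin 7,
      h (e7 i) (e7 l) =
        (1/12 : ℝ) * (rhoHat ρ i l + rhoHat ρ l i)
          - (1/48 : ℝ) * (∑ m, rhoHat ρ m m) * kd7 i l := by
  intro i l
  have tr : (∑ m, rhoHat ρ m m) = 48 * (∑ m, h (e7 m) (e7 m)) := by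
    have e1 : ∀ m : Fin 7, rhoHat ρ m m
        = 6 * h (e7 m) (e7 m) + 6 * (∑ m', h (e7 m') (e7 m')) := by
      intro m
      have t := G2Aux.two_rho ρ h hsymm X heq m m
      have hB : (∑ a, X a * ((G2Aux.phiT m m a : ℤ) : ℝ)) = 0 := by
        apply Finset.sum_eq_zero
        intro a _
        rw [G2Aux.RPhiDiag m a]; ring
      have hkd : kd7 m m = 1 := by simp [kd7]
      rw [hB, hkd] at t
      linarith
    calc (∑ m, rhoHat ρ m m)
        = ∑ m, (6 * h (e7 m) (e7 m) + 6 * (∑ m', h (e7 m') (e7 m'))) :=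
          Finset.sum_congr rfl fun m _ => e1 m
      _ = (∑ m, 6 * h (e7 m) (e7 m)) + (∑ _m : Fin 7, 6 * (∑ m', h (e7 m') (e7 m'))) :=
          Finset.sum_add_distrib
      _ = 6 * (∑ m, h (e7 m) (e7 m)) + 7 * (6 * (∑ m', h (e7 m') (e7 m'))) := by
          rw [← Finset.mul_sum, Finset.sum_const, Finset.card_univ]
          simp
      _ = 48 * (∑ m, h (e7 m) (e7 m)) := by ring
  have t1 := G2Aux.two_rho ρ h hsymm X heq i l
  have t2 := G2Aux.two_rho ρ h hsymm X heq l i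
  have hs : h (e7 l) (e7 i) = h (e7 i) (e7 l) := hsymm _ _
  have kds : kd7 l i = kd7 i l := by simp [kd7, eq_comm]
  have Bs : (∑ a, X a * ((G2Aux.phiT i l a : ℤ) : ℝ))
      + (∑ a, X a * ((G2Aux.phiT l i a : ℤ) : ℝ)) = 0 := by
    rw [← Finset.sum_add_distrib]
    apply Finset.sum_eq_zero
    intro a _
    rw [G2Aux.RPhiAsym l i a]; ring
  rw [tr]
  rw [hs, kds] at t2
  linear_combination (-(1/24 : ℝ)) * t1 + (-(1/24 : ℝ)) * t2 + (-(1/2 : ℝ)) * Bs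
end
end

section
/- (Pointwise form of Proposition 2.11) Let S be a 4-dimensional linear subspace of ℝ⁷. Then φ vanishes identically on S (i.e. φ(x,y,z) = 0 for all x,y,z ∈ S) if and only if χ(x,y,z) ∈ S for all x,y,z ∈ S. -/
open scoped RealInnerProductSpace

noncomputable section

/-! ### Auxiliary integer-valued components -/

def kdZ (i j : Fin 7) : ℤ := if i = j then 1 else 0
def det3Z (a b c d e f g h i : ℤ) : ℤ := a*e*i - a*f*h - b*d*i + b*f*g + c*d*h - c*e*g
def tripZ (a b c i j k : Fin 7) : ℤ :=
  det3Z (kdZ a i) (kdZ a j) (kdZ a k) (kdZ b i) (kdZ b j) (kdZ b k) (kdZ c i) (kdZ c j) (kdZ c k)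
def quadZ (a b c d i j k l : Fin 7) : ℤ :=
  kdZ a i * det3Z (kdZ b j) (kdZ b k) (kdZ b l) (kdZ c j) (kdZ c k) (kdZ c l) (kdZ d j) (kdZ d k) (kdZ d l)
  - kdZ a j * det3Z (kdZ b i) (kdZ b k) (kdZ b l) (kdZ c i) (kdZ c k) (kdZ c l) (kdZ d i) (kdZ d k) (kdZ d l)
  + kdZ a k * det3Z (kdZ b i) (kdZ b j) (kdZ b l) (kdZ c i) (kdZ c j) (kdZ c l) (kdZ d i) (kdZ d j) (kdZ d l)
  - kdZ a l * det3Z (kdZ b i) (kdZ b j) (kdZ b k) (kdZ c i) (kdZ c j) (kdZ c k) (kdZ d i) (kdZ d j) (kdZ d k)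
def phiZ (i j k : Fin 7) : ℤ :=
  tripZ 0 1 2 i j k + tripZ 0 3 4 i j k - tripZ 0 5 6 i j k
  + tripZ 1 3 5 i j k - tripZ 1 6 4 i j k + tripZ 2 3 6 i j k - tripZ 2 4 5 i j k
def psiZ (i j k l : Fin 7) : ℤ :=
  quadZ 3 4 5 6 i j k l - quadZ 1 2 3 4 i j k l + quadZ 1 2 5 6 i j k l
  - quadZ 2 0 3 5 i j k l + quadZ 2 0 6 4 i j k l
  - quadZ 0 1 3 6 i j k l + quadZ 0 1 4 5 i j k l

set_option maxRecDepth 100000 in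
set_option maxHeartbeats 8000000 in
lemma keyZ : ∀ a b c d : Fin 7, psiZ a b c d =
    phiZ b c 0 * phiZ a 0 d + phiZ b c 1 * phiZ a 1 d + phiZ b c 2 * phiZ a 2 d
  + phiZ b c 3 * phiZ a 3 d + phiZ b c 4 * phiZ a 4 d + phiZ b c 5 * phiZ a 5 d
  + phiZ b c 6 * phiZ a 6 d + kdZ a b * kdZ c d - kdZ a c * kdZ b d := by decide

set_option maxRecDepth 100000 in
set_option maxHeartbeats 2000000 in
lemma phiZ_cyc : ∀ i j k : Fin 7, phiZ i j k = phiZ j k i := by decide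
set_option maxRecDepth 100000 in
set_option maxHeartbeats 2000000 in
lemma phiZ_swap12 : ∀ i j k : Fin 7, phiZ j i k = - phiZ i j k := by decide
set_option maxRecDepth 100000 in
set_option maxHeartbeats 2000000 in
lemma phiZ_swap23 : ∀ i j k : Fin 7, phiZ i k j = - phiZ i j k := by decide
set_option maxRecDepth 100000 in
set_option maxHeartbeats 2000000 in
lemma phiZ_swap13 : ∀ i j k : Fin 7, phiZ k j i = - phiZ i j k := by decide
set_option maxRecDepth 100000 in
set_option maxHeartbeats 8000000 in
lemma psiZ_swap12 : ∀ i j k l : Fin 7, psiZ j i k l = - psiZ i j k l := by decide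
set_option maxRecDepth 100000 in
set_option maxHeartbeats 8000000 in
lemma psiZ_swap14 : ∀ i j k l : Fin 7, psiZ l j k i = - psiZ i j k l := by decide
set_option maxRecDepth 100000 in
set_option maxHeartbeats 8000000 in
lemma psiZ_swap24 : ∀ i j k l : Fin 7, psiZ i l k j = - psiZ i j k l := by decide
set_option maxRecDepth 100000 in
set_option maxHeartbeats 8000000 in
lemma psiZ_swap34 : ∀ i j k l : Fin 7, psiZ i j l k = - psiZ i j k l := by decide

/-! ### Casting the components to `ℝ` -/

lemma kd7_cast (i j : Fin 7) : kd7 i j = (kdZ i j : ℝ) := by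
  unfold kd7 kdZ; split <;> simp

lemma trip7_cast (a b c i j k : Fin 7) : trip7 a b c i j k = (tripZ a b c i j k : ℝ) := by
  simp [trip7, Matrix.det_fin_three, tripZ, det3Z, kd7_cast]

lemma quad7_cast (a b c d i j k l : Fin 7) : quad7 a b c d i j k l = (quadZ a b c d i j k l : ℝ) := by
  have h1 : ((2:Fin 4).succAbove 2) = 3 := by decide
  have h2 : ((1:Fin 4).succAbove 2) = 3 := by decide
  have h3 : (Fin.castSucc (2 : Fin 3)) = (2 : Fin 4) := by decide
  have h4 : ((3:Fin 4).succAbove 2) = 2 := by decide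
  simp [quad7, Matrix.det_succ_row_zero, Fin.sum_univ_succ, Matrix.det_fin_three, quadZ, det3Z,
    kd7_cast, h1, h2, h3, h4]
  ring

lemma phiC_cast (i j k : Fin 7) : phiC i j k = (phiZ i j k : ℝ) := by
  simp only [phiC, phiZ, trip7_cast]; push_cast; ring

lemma psiC_cast (i j k l : Fin 7) : psiC i j k l = (psiZ i j k l : ℝ) := by
  simp only [psiC, psiZ, quad7_cast]; push_cast; ring

lemma phiC_cyc (i j k : Fin 7) : phiC i j k = phiC j k i := by
  rw [phiC_cast, phiC_cast, phiZ_cyc i j k]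

lemma phiC_swap12 (i j k : Fin 7) : phiC j i k = - phiC i j k := by
  rw [phiC_cast, phiC_cast, phiZ_swap12 i j k, Int.cast_neg]

lemma phiC_swap23 (i j k : Fin 7) : phiC i k j = - phiC i j k := by
  rw [phiC_cast, phiC_cast, phiZ_swap23 i j k, Int.cast_neg]

lemma phiC_swap13 (i j k : Fin 7) : phiC k j i = - phiC i j k := by
  rw [phiC_cast, phiC_cast, phiZ_swap13 i j k, Int.cast_neg]

lemma psiC_swap12 (i j k l : Fin 7) : psiC j i k l = - psiC i j k l := by
  rw [psiC_cast, psiC_cast, psiZ_swap12 i j k l, Int.cast_neg]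

lemma psiC_swap14 (i j k l : Fin 7) : psiC l j k i = - psiC i j k l := by
  rw [psiC_cast, psiC_cast, psiZ_swap14 i j k l, Int.cast_neg]

lemma psiC_swap24 (i j k l : Fin 7) : psiC i l k j = - psiC i j k l := by
  rw [psiC_cast, psiC_cast, psiZ_swap24 i j k l, Int.cast_neg]

lemma psiC_swap34 (i j k l : Fin 7) : psiC i j l k = - psiC i j k l := by
  rw [psiC_cast, psiC_cast, psiZ_swap34 i j k l, Int.cast_neg]

lemma keyC (a b c d : Fin 7) : psiC a b c d =
    (∑ m, phiC b c m * phiC a m d) + kd7 a b * kd7 c d - kd7 a c * kd7 b d := by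
  rw [Fin.sum_univ_seven]
  simp only [psiC_cast, phiC_cast, kd7_cast]
  exact_mod_cast keyZ a b c d

/-! ### Sum machinery -/

lemma sum_invol_zero {α : Type*} [Fintype α] (F : α → ℝ) (σ : α ≃ α)
    (h : ∀ p, F (σ p) = - F p) : ∑ p, F p = 0 := by
  have h1 : ∑ p, F (σ p) = ∑ p, F p := Fintype.sum_equiv σ _ _ (fun p => rfl)
  have h2 : ∑ p, F (σ p) = - ∑ p, F p := by
    rw [← Finset.sum_neg_distrib]
    exact Finset.sum_congr rfl fun p _ => h p
  linarith

lemma e7_apply (m t : Fin 7) : e7 m t = if t = m then 1 else 0 := by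
  simp [e7, EuclideanSpace.single_apply]

lemma inner_euc (x y : E7) : ⟪x, y⟫ = ∑ i, x i * y i := by
  simp [PiLp.inner_apply, RCLike.inner_apply, conj_trivial]
  exact Finset.sum_congr rfl fun i _ => mul_comm _ _

lemma phi7_prod (x y z : E7) : phi7 x y z = ∑ p : Fin 7 × Fin 7 × Fin 7,
    x p.1 * y p.2.1 * z p.2.2 * phiC p.1 p.2.1 p.2.2 := by
  simp only [phi7, Fintype.sum_prod_type]

lemma psi7_prod (x y z w : E7) : psi7 x y z w = ∑ p : Fin 7 × Fin 7 × Fin 7 × Fin 7,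
    x p.1 * y p.2.1 * z p.2.2.1 * w p.2.2.2 * psiC p.1 p.2.1 p.2.2.1 p.2.2.2 := by
  simp only [psi7, Fintype.sum_prod_type]

/-! ### Repeated-argument vanishing -/

lemma phi7_rep12 (x z : E7) : phi7 x x z = 0 := by
  rw [phi7_prod]
  refine sum_invol_zero _ ⟨fun p => (p.2.1, p.1, p.2.2), fun p => (p.2.1, p.1, p.2.2),
    fun p => rfl, fun p => rfl⟩ ?_
  rintro ⟨i, j, k⟩
  show x j * x i * z k * phiC j i k = -(x i * x j * z k * phiC i j k)
  rw [phiC_swap12]; ring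

lemma phi7_rep13 (x y : E7) : phi7 x y x = 0 := by
  rw [phi7_prod]
  refine sum_invol_zero _ ⟨fun p => (p.2.2, p.2.1, p.1), fun p => (p.2.2, p.2.1, p.1),
    fun p => rfl, fun p => rfl⟩ ?_
  rintro ⟨i, j, k⟩
  show x k * y j * x i * phiC k j i = -(x i * y j * x k * phiC i j k)
  rw [phiC_swap13]; ring

lemma phi7_rep23 (x y : E7) : phi7 x y y = 0 := by
  rw [phi7_prod]
  refine sum_invol_zero _ ⟨fun p => (p.1, p.2.2, p.2.1), fun p => (p.1, p.2.2, p.2.1),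
    fun p => rfl, fun p => rfl⟩ ?_
  rintro ⟨i, j, k⟩
  show x i * y k * y j * phiC i k j = -(x i * y j * y k * phiC i j k)
  rw [phiC_swap23]; ring

lemma psi7_rep12 (x z w : E7) : psi7 x x z w = 0 := by
  rw [psi7_prod]
  refine sum_invol_zero _ ⟨fun p => (p.2.1, p.1, p.2.2.1, p.2.2.2),
    fun p => (p.2.1, p.1, p.2.2.1, p.2.2.2), fun p => rfl, fun p => rfl⟩ ?_
  rintro ⟨i, j, k, l⟩
  show x j * x i * z k * w l * psiC j i k l = -(x i * x j * z k * w l * psiC i j k l)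
  rw [psiC_swap12]; ring

lemma psi7_rep14 (x y z : E7) : psi7 x y z x = 0 := by
  rw [psi7_prod]
  refine sum_invol_zero _ ⟨fun p => (p.2.2.2, p.2.1, p.2.2.1, p.1),
    fun p => (p.2.2.2, p.2.1, p.2.2.1, p.1), fun p => rfl, fun p => rfl⟩ ?_
  rintro ⟨i, j, k, l⟩
  show x l * y j * z k * x i * psiC l j k i = -(x i * y j * z k * x l * psiC i j k l)
  rw [psiC_swap14]; ring

lemma psi7_rep24 (x y z : E7) : psi7 x y z y = 0 := by
  rw [psi7_prod]
  refine sum_invol_zero _ ⟨fun p => (p.1, p.2.2.2, p.2.2.1, p.2.1),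
    fun p => (p.1, p.2.2.2, p.2.2.1, p.2.1), fun p => rfl, fun p => rfl⟩ ?_
  rintro ⟨i, j, k, l⟩
  show x i * y l * z k * y j * psiC i l k j = -(x i * y j * z k * y l * psiC i j k l)
  rw [psiC_swap24]; ring

lemma psi7_rep34 (x y z : E7) : psi7 x y z z = 0 := by
  rw [psi7_prod]
  refine sum_invol_zero _ ⟨fun p => (p.1, p.2.1, p.2.2.2, p.2.2.1),
    fun p => (p.1, p.2.1, p.2.2.2, p.2.2.1), fun p => rfl, fun p => rfl⟩ ?_
  rintro ⟨i, j, k, l⟩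
  show x i * y j * z l * z k * psiC i j l k = -(x i * y j * z k * z l * psiC i j k l)
  rw [psiC_swap34]; ring

lemma phi7_cyc (x y z : E7) : phi7 x y z = phi7 y z x := by
  rw [phi7_prod, phi7_prod]
  refine Fintype.sum_equiv ⟨fun p => (p.2.1, p.2.2, p.1), fun p => (p.2.2, p.1, p.2.1),
    fun p => rfl, fun p => rfl⟩ _ _ ?_
  rintro ⟨i, j, k⟩
  show x i * y j * z k * phiC i j k = y j * z k * x i * phiC j k i
  rw [phiC_cyc i j k]; ring
/-! ### Apply and inner-product lemmas -/

lemma cross7_apply (y z : E7) (m : Fin 7) :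
    cross7 y z m = ∑ b, ∑ c, y b * z c * phiC b c m := by
  show phi7 y z (e7 m) = _
  rw [phi7]
  refine Finset.sum_congr rfl fun b _ => Finset.sum_congr rfl fun c _ => ?_
  rw [Finset.sum_eq_single m]
  · rw [e7_apply, if_pos rfl]; ring
  · intro t _ ht
    rw [e7_apply, if_neg ht]; ring
  · intro h; exact absurd (Finset.mem_univ m) h

lemma chi7_apply (x y z : E7) (l : Fin 7) :
    chi7 x y z l = ∑ a, ∑ b, ∑ c, x a * y b * z c * psiC a b c l := by
  show psi7 x y z (e7 l) = _
  rw [psi7]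
  refine Finset.sum_congr rfl fun a _ => Finset.sum_congr rfl fun b _ =>
    Finset.sum_congr rfl fun c _ => ?_
  rw [Finset.sum_eq_single l]
  · rw [e7_apply, if_pos rfl]; ring
  · intro t _ ht
    rw [e7_apply, if_neg ht]; ring
  · intro h; exact absurd (Finset.mem_univ l) h

lemma inner_e7 (z : E7) (l : Fin 7) : ⟪z, e7 l⟫ = z l := by
  rw [inner_euc, Finset.sum_eq_single l]
  · rw [e7_apply, if_pos rfl]; ring
  · intro t _ ht
    rw [e7_apply, if_neg ht]; ring
  · intro h; exact absurd (Finset.mem_univ l) h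

lemma inner_cross (x y z : E7) : ⟪cross7 x y, z⟫ = phi7 x y z := by
  rw [inner_euc, phi7_prod]
  have h1 : ∀ m : Fin 7, cross7 x y m * z m
      = ∑ q : Fin 7 × Fin 7, x q.1 * y q.2 * phiC q.1 q.2 m * z m := by
    intro m
    rw [cross7_apply,
      show (∑ b, ∑ c, x b * y c * phiC b c m)
        = ∑ q : Fin 7 × Fin 7, x q.1 * y q.2 * phiC q.1 q.2 m from by
          simp only [Fintype.sum_prod_type],
      Finset.sum_mul]
  rw [Finset.sum_congr rfl fun m _ => h1 m,
    show (∑ m, ∑ q : Fin 7 × Fin 7, x q.1 * y q.2 * phiC q.1 q.2 m * z m)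
      = ∑ s : Fin 7 × Fin 7 × Fin 7, x s.2.1 * y s.2.2 * phiC s.2.1 s.2.2 s.1 * z s.1 from by
        simp only [Fintype.sum_prod_type]]
  refine Fintype.sum_equiv ⟨fun s => (s.2.1, s.2.2, s.1), fun p => (p.2.2, p.1, p.2.1),
    fun s => rfl, fun p => rfl⟩ _ _ ?_
  rintro ⟨m, i, j⟩
  show x i * y j * phiC i j m * z m = x i * y j * z m * phiC i j m
  ring

lemma inner_chi (x y z w : E7) : ⟪chi7 x y z, w⟫ = psi7 x y z w := by
  rw [inner_euc, psi7_prod]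
  have h1 : ∀ l : Fin 7, chi7 x y z l * w l
      = ∑ q : Fin 7 × Fin 7 × Fin 7,
          x q.1 * y q.2.1 * z q.2.2 * psiC q.1 q.2.1 q.2.2 l * w l := by
    intro l
    rw [chi7_apply,
      show (∑ a, ∑ b, ∑ c, x a * y b * z c * psiC a b c l)
        = ∑ q : Fin 7 × Fin 7 × Fin 7, x q.1 * y q.2.1 * z q.2.2 * psiC q.1 q.2.1 q.2.2 l from by
          simp only [Fintype.sum_prod_type],
      Finset.sum_mul]
  rw [Finset.sum_congr rfl fun l _ => h1 l,
    show (∑ l, ∑ q : Fin 7 × Fin 7 × Fin 7,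
        x q.1 * y q.2.1 * z q.2.2 * psiC q.1 q.2.1 q.2.2 l * w l)
      = ∑ s : Fin 7 × Fin 7 × Fin 7 × Fin 7,
          x s.2.1 * y s.2.2.1 * z s.2.2.2 * psiC s.2.1 s.2.2.1 s.2.2.2 s.1 * w s.1 from by
        simp only [Fintype.sum_prod_type]]
  refine Fintype.sum_equiv ⟨fun s => (s.2.1, s.2.2.1, s.2.2.2, s.1),
    fun p => (p.2.2.2, p.1, p.2.1, p.2.2.1), fun s => rfl, fun p => rfl⟩ _ _ ?_
  rintro ⟨l, i, j, k⟩
  show x i * y j * z k * psiC i j k l * w l = x i * y j * z k * w l * psiC i j k l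
  ring
/-! ### The fundamental identity `χ(x,y,z) = x × (y × z) + ⟨x,y⟩z − ⟨x,z⟩y` -/

lemma keyP1a (x y z w : E7) :
    (∑ p : Fin 7 × Fin 7 × Fin 7 × Fin 7,
      x p.1 * y p.2.1 * z p.2.2.1 * w p.2.2.2 *
        (∑ m, phiC p.2.1 p.2.2.1 m * phiC p.1 m p.2.2.2))
    = ∑ s : Fin 7 × Fin 7 × Fin 7 × Fin 7 × Fin 7,
        x s.1 * y s.2.1 * z s.2.2.1 * w s.2.2.2.1 *
          (phiC s.2.1 s.2.2.1 s.2.2.2.2 * phiC s.1 s.2.2.2.2 s.2.2.2.1) := by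
  simp only [Fintype.sum_prod_type]
  refine Finset.sum_congr rfl fun a _ => Finset.sum_congr rfl fun b _ =>
    Finset.sum_congr rfl fun c _ => Finset.sum_congr rfl fun d _ => ?_
  rw [Finset.mul_sum]

lemma keyP1c (x y z w : E7) :
    (∑ s : Fin 7 × Fin 7 × Fin 7 × Fin 7 × Fin 7,
        x s.1 * y s.2.1 * z s.2.2.1 * w s.2.2.2.1 *
          (phiC s.2.1 s.2.2.1 s.2.2.2.2 * phiC s.1 s.2.2.2.2 s.2.2.2.1))
    = ∑ s : Fin 7 × Fin 7 × Fin 7 × Fin 7 × Fin 7,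
        x s.1 * y s.2.2.2.1 * z s.2.2.2.2 * w s.2.2.1 *
          (phiC s.2.2.2.1 s.2.2.2.2 s.2.1 * phiC s.1 s.2.1 s.2.2.1) := by
  refine Fintype.sum_equiv ⟨fun s => (s.1, s.2.2.2.2, s.2.2.2.1, s.2.1, s.2.2.1),
    fun s => (s.1, s.2.2.2.1, s.2.2.2.2, s.2.2.1, s.2.1), fun s => rfl, fun s => rfl⟩ _ _ ?_
  rintro ⟨a, b, c, d, m⟩
  show x a * y b * z c * w d * (phiC b c m * phiC a m d)
    = x a * y b * z c * w d * (phiC b c m * phiC a m d)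
  rfl

lemma keyP1b (x y z w : E7) :
    phi7 x (cross7 y z) w
    = ∑ s : Fin 7 × Fin 7 × Fin 7 × Fin 7 × Fin 7,
        x s.1 * y s.2.2.2.1 * z s.2.2.2.2 * w s.2.2.1 *
          (phiC s.2.2.2.1 s.2.2.2.2 s.2.1 * phiC s.1 s.2.1 s.2.2.1) := by
  rw [phi7,
    show (∑ s : Fin 7 × Fin 7 × Fin 7 × Fin 7 × Fin 7,
        x s.1 * y s.2.2.2.1 * z s.2.2.2.2 * w s.2.2.1 *
          (phiC s.2.2.2.1 s.2.2.2.2 s.2.1 * phiC s.1 s.2.1 s.2.2.1))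
      = ∑ a, ∑ m, ∑ d, ∑ b, ∑ c,
          x a * y b * z c * w d * (phiC b c m * phiC a m d) from by
        simp only [Fintype.sum_prod_type]]
  refine Finset.sum_congr rfl fun a _ => Finset.sum_congr rfl fun m _ =>
    Finset.sum_congr rfl fun d _ => ?_
  rw [cross7_apply, Finset.mul_sum, Finset.sum_mul, Finset.sum_mul]
  refine Finset.sum_congr rfl fun b _ => ?_
  rw [Finset.mul_sum, Finset.sum_mul, Finset.sum_mul]
  refine Finset.sum_congr rfl fun c _ => ?_
  ring

lemma keyP2 (x y z w : E7) :
    (∑ p : Fin 7 × Fin 7 × Fin 7 × Fin 7,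
      x p.1 * y p.2.1 * z p.2.2.1 * w p.2.2.2 * (kd7 p.1 p.2.1 * kd7 p.2.2.1 p.2.2.2))
    = ⟪x, y⟫ * ⟪z, w⟫ := by
  simp only [Fintype.sum_prod_type]
  rw [inner_euc, inner_euc, Finset.sum_mul_sum]
  refine Finset.sum_congr rfl fun a _ => ?_
  rw [Finset.sum_eq_single a]
  · refine Finset.sum_congr rfl fun c _ => ?_
    rw [Finset.sum_eq_single c]
    · unfold kd7; simp; ring
    · intro d _ hd
      unfold kd7
      rw [if_neg (Ne.symm hd)]; ring
    · intro h; exact absurd (Finset.mem_univ c) h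
  · intro b _ hb
    have : kd7 a b = 0 := by unfold kd7; rw [if_neg (Ne.symm hb)]
    simp [this]
  · intro h; exact absurd (Finset.mem_univ a) h

lemma keyP3 (x y z w : E7) :
    (∑ p : Fin 7 × Fin 7 × Fin 7 × Fin 7,
      x p.1 * y p.2.1 * z p.2.2.1 * w p.2.2.2 * (kd7 p.1 p.2.2.1 * kd7 p.2.1 p.2.2.2))
    = ⟪x, z⟫ * ⟪y, w⟫ := by
  simp only [Fintype.sum_prod_type]
  rw [inner_euc, inner_euc, Finset.sum_mul_sum]
  refine Finset.sum_congr rfl fun a _ => Finset.sum_congr rfl fun b _ => ?_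
  rw [Finset.sum_eq_single a]
  · rw [Finset.sum_eq_single b]
    · unfold kd7; simp; ring
    · intro d _ hd
      unfold kd7
      rw [if_neg (Ne.symm hd)]; ring
    · intro h; exact absurd (Finset.mem_univ b) h
  · intro c _ hc
    have : kd7 a c = 0 := by unfold kd7; rw [if_neg (Ne.symm hc)]
    simp [this]
  · intro h; exact absurd (Finset.mem_univ a) h

lemma key_scalar (x y z w : E7) :
    psi7 x y z w = phi7 x (cross7 y z) w + ⟪x, y⟫ * ⟪z, w⟫ - ⟪x, z⟫ * ⟪y, w⟫ := by
  rw [psi7_prod, ← keyP2 x y z w, ← keyP3 x y z w, keyP1b, ← keyP1c, ← keyP1a,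
    ← Finset.sum_add_distrib, ← Finset.sum_sub_distrib]
  refine Finset.sum_congr rfl fun p _ => ?_
  rw [keyC]; ring

lemma chi7_eq (x y z : E7) :
    chi7 x y z = cross7 x (cross7 y z) + ⟪x, y⟫ • z - ⟪x, z⟫ • y := by
  ext l
  show psi7 x y z (e7 l)
    = (cross7 x (cross7 y z) + ⟪x, y⟫ • z - ⟪x, z⟫ • y) l
  have happ : (cross7 x (cross7 y z) + ⟪x, y⟫ • z - ⟪x, z⟫ • y) l
      = phi7 x (cross7 y z) (e7 l) + ⟪x, y⟫ * z l - ⟪x, z⟫ * y l := rfl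
  rw [happ, key_scalar x y z (e7 l), inner_e7, inner_e7]
/-! ### Vector-level consequences -/

lemma chi7_xx (x u : E7) : chi7 x x u = 0 := by
  ext l
  show psi7 x x u (e7 l) = 0
  exact psi7_rep12 x u (e7 l)

lemma chi7_zero1 (y z : E7) : chi7 0 y z = 0 := by
  ext l
  show psi7 0 y z (e7 l) = 0
  rw [psi7]
  simp [show ∀ i : Fin 7, (0 : E7) i = 0 from fun _ => rfl]

lemma cross7_add2 (x u v : E7) : cross7 x (u + v) = cross7 x u + cross7 x v := by
  ext m
  show phi7 x (u + v) (e7 m) = phi7 x u (e7 m) + phi7 x v (e7 m)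
  simp only [phi7, ← Finset.sum_add_distrib]
  refine Finset.sum_congr rfl fun i _ => Finset.sum_congr rfl fun j _ =>
    Finset.sum_congr rfl fun k _ => ?_
  show x i * (u j + v j) * e7 m k * phiC i j k = _
  ring

lemma cross7_smul2 (c : ℝ) (x u : E7) : cross7 x (c • u) = c • cross7 x u := by
  ext m
  show phi7 x (c • u) (e7 m) = c * phi7 x u (e7 m)
  simp only [phi7, Finset.mul_sum]
  refine Finset.sum_congr rfl fun i _ => Finset.sum_congr rfl fun j _ =>
    Finset.sum_congr rfl fun k _ => ?_
  show x i * (c * u j) * e7 m k * phiC i j k = _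
  ring

lemma cross7_zero2 (x : E7) : cross7 x 0 = 0 := by
  ext m
  show phi7 x 0 (e7 m) = 0
  rw [phi7]
  simp [show ∀ j : Fin 7, (0 : E7) j = 0 from fun _ => rfl]

lemma cross7_cross7 (x u : E7) :
    cross7 x (cross7 x u) = ⟪x, u⟫ • x - ⟪x, x⟫ • u := by
  have h := chi7_eq x x u
  rw [chi7_xx] at h
  have h2 : cross7 x (cross7 x u) + ⟪x, x⟫ • u - ⟪x, u⟫ • x = 0 := h.symm
  rw [sub_eq_zero] at h2
  rw [← sub_eq_of_eq_add' h2.symm]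
  abel

/-! ### Linearity of `phi7` -/

lemma phi7_add1 (x x' y z : E7) : phi7 (x + x') y z = phi7 x y z + phi7 x' y z := by
  simp only [phi7, ← Finset.sum_add_distrib]
  refine Finset.sum_congr rfl fun i _ => Finset.sum_congr rfl fun j _ =>
    Finset.sum_congr rfl fun k _ => ?_
  show (x i + x' i) * y j * z k * phiC i j k = _
  ring

lemma phi7_add2 (x y y' z : E7) : phi7 x (y + y') z = phi7 x y z + phi7 x y' z := by
  simp only [phi7, ← Finset.sum_add_distrib]
  refine Finset.sum_congr rfl fun i _ => Finset.sum_congr rfl fun j _ =>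
    Finset.sum_congr rfl fun k _ => ?_
  show x i * (y j + y' j) * z k * phiC i j k = _
  ring

lemma phi7_add3 (x y z z' : E7) : phi7 x y (z + z') = phi7 x y z + phi7 x y z' := by
  simp only [phi7, ← Finset.sum_add_distrib]
  refine Finset.sum_congr rfl fun i _ => Finset.sum_congr rfl fun j _ =>
    Finset.sum_congr rfl fun k _ => ?_
  show x i * y j * (z k + z' k) * phiC i j k = _
  ring

lemma phi7_smul1 (c : ℝ) (x y z : E7) : phi7 (c • x) y z = c * phi7 x y z := by
  simp only [phi7, Finset.mul_sum]
  refine Finset.sum_congr rfl fun i _ => Finset.sum_congr rfl fun j _ =>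
    Finset.sum_congr rfl fun k _ => ?_
  show (c * x i) * y j * z k * phiC i j k = _
  ring

lemma phi7_smul2 (c : ℝ) (x y z : E7) : phi7 x (c • y) z = c * phi7 x y z := by
  simp only [phi7, Finset.mul_sum]
  refine Finset.sum_congr rfl fun i _ => Finset.sum_congr rfl fun j _ =>
    Finset.sum_congr rfl fun k _ => ?_
  show x i * (c * y j) * z k * phiC i j k = _
  ring

lemma phi7_smul3 (c : ℝ) (x y z : E7) : phi7 x y (c • z) = c * phi7 x y z := by
  simp only [phi7, Finset.mul_sum]
  refine Finset.sum_congr rfl fun i _ => Finset.sum_congr rfl fun j _ =>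
    Finset.sum_congr rfl fun k _ => ?_
  show x i * y j * (c * z k) * phiC i j k = _
  ring

lemma phi7_zero1 (y z : E7) : phi7 0 y z = 0 := by
  rw [phi7]; simp [show ∀ i : Fin 7, (0 : E7) i = 0 from fun _ => rfl]

lemma phi7_zero2 (x z : E7) : phi7 x 0 z = 0 := by
  rw [phi7]; simp [show ∀ i : Fin 7, (0 : E7) i = 0 from fun _ => rfl]

lemma phi7_zero3 (x y : E7) : phi7 x y 0 = 0 := by
  rw [phi7]; simp [show ∀ i : Fin 7, (0 : E7) i = 0 from fun _ => rfl]

lemma lin_sum {ι : Type*} (s : Finset ι) (F : E7 → ℝ) (h0 : F 0 = 0)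
    (hadd : ∀ u v, F (u + v) = F u + F v) (g : ι → E7) :
    F (∑ t ∈ s, g t) = ∑ t ∈ s, F (g t) := by
  classical
  induction s using Finset.induction_on with
  | empty => simpa
  | insert _ _ h ih => rw [Finset.sum_insert h, hadd, ih, Finset.sum_insert h]

lemma phi7_expand {ι : Type*} [Fintype ι] (g : ι → E7) (cx cy cz : ι → ℝ)
    (hv : ∀ i j k, phi7 (g i) (g j) (g k) = 0) :
    phi7 (∑ i, cx i • g i) (∑ j, cy j • g j) (∑ k, cz k • g k) = 0 := by
  rw [lin_sum _ (fun v => phi7 v _ _) (phi7_zero1 _ _) (fun u v => phi7_add1 u v _ _) _]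
  rw [Finset.sum_eq_zero]
  intro i _
  rw [phi7_smul1]
  rw [lin_sum _ (fun v => phi7 (g i) v _) (phi7_zero2 _ _) (fun u v => phi7_add2 _ u v _) _]
  rw [Finset.sum_eq_zero]
  · ring
  intro j _
  rw [phi7_smul2]
  rw [lin_sum _ (fun v => phi7 (g i) (g j) v) (phi7_zero3 _ _) (fun u v => phi7_add3 _ _ u v) _]
  rw [Finset.sum_eq_zero]
  · ring
  intro k _
  rw [phi7_smul3, hv]
  ring
/-! ### The key geometric lemma for the reverse direction -/

lemma fin4_m : ∀ i j k : Fin 4, i ≠ j → i ≠ k → j ≠ k →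
    ∃ m, m ≠ i ∧ m ≠ j ∧ m ≠ k := by decide

lemma fin4_t : ∀ i j k m t : Fin 4, i ≠ j → i ≠ k → j ≠ k → m ≠ i → m ≠ j → m ≠ k →
    (t = i ∨ t = j ∨ t = k ∨ t = m) := by decide

lemma vanish (S : Submodule ℝ E7)
    (hχ : ∀ x ∈ S, ∀ y ∈ S, ∀ z ∈ S, chi7 x y z ∈ S)
    (a b c d : E7) (ha : a ∈ S) (hb : b ∈ S) (hc : c ∈ S) (hd : d ∈ S)
    (hab : ⟪a, b⟫ = 0) (hac : ⟪a, c⟫ = 0) (had : ⟪a, d⟫ = 0)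
    (hdb : ⟪d, b⟫ = 0) (hdc : ⟪d, c⟫ = 0)
    (haa : ⟪a, a⟫ = 1) (hdd : ⟪d, d⟫ = 1)
    (hS4 : ∀ w ∈ S, ⟪a, w⟫ = 0 → ⟪b, w⟫ = 0 → ⟪c, w⟫ = 0 → ⟪d, w⟫ = 0 → w = 0) :
    phi7 a b c = 0 := by
  have hveq : chi7 d b c = cross7 d (cross7 b c) := by
    rw [chi7_eq, hdb, hdc]; simp
  have hvS : chi7 d b c ∈ S := hχ d hd b hb c hc
  have hvb : ⟪b, chi7 d b c⟫ = 0 := by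
    rw [real_inner_comm, inner_chi]; exact psi7_rep24 d b c
  have hvc : ⟪c, chi7 d b c⟫ = 0 := by
    rw [real_inner_comm, inner_chi]; exact psi7_rep34 d b c
  have hvd : ⟪d, chi7 d b c⟫ = 0 := by
    rw [real_inner_comm, inner_chi]; exact psi7_rep14 d b c
  have hba : ⟪b, a⟫ = 0 := by rw [real_inner_comm]; exact hab
  have hca : ⟪c, a⟫ = 0 := by rw [real_inner_comm]; exact hac
  have hda : ⟪d, a⟫ = 0 := by rw [real_inner_comm]; exact had
  have hw : chi7 d b c - ⟪a, chi7 d b c⟫ • a = 0 := by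
    apply hS4 _ (S.sub_mem hvS (S.smul_mem _ ha))
    · rw [inner_sub_right, real_inner_smul_right, haa]; ring
    · rw [inner_sub_right, real_inner_smul_right, hvb, hba]; ring
    · rw [inner_sub_right, real_inner_smul_right, hvc, hca]; ring
    · rw [inner_sub_right, real_inner_smul_right, hvd, hda]; ring
  have hva : chi7 d b c = ⟪a, chi7 d b c⟫ • a := sub_eq_zero.mp hw
  rw [phi7_cyc, ← inner_cross]
  have hcc := cross7_cross7 d (cross7 b c)
  rw [← hveq, hdd, one_smul] at hcc
  have hu_eq : cross7 b c = ⟪d, cross7 b c⟫ • d - cross7 d (chi7 d b c) := by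
    rw [hcc]; abel
  rw [hu_eq, inner_sub_left, real_inner_smul_left, hda, inner_cross]
  have hz : phi7 d (chi7 d b c) a = 0 := by
    rw [hva, phi7_smul2, phi7_rep23]; ring
  rw [hz]; ring
/-! ### Main theorem -/

theorem prop_2_11_aux (S : Submodule ℝ E7) (hS : Module.finrank ℝ S = 4) :
    (∀ x ∈ S, ∀ y ∈ S, ∀ z ∈ S, phi7 x y z = 0) ↔
    (∀ x ∈ S, ∀ y ∈ S, ∀ z ∈ S, chi7 x y z ∈ S) := by
  constructor
  · intro hΦ x hx y hy z hz
    by_cases hx0 : x = 0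
    · rw [hx0, chi7_zero1]; exact S.zero_mem
    have huS : cross7 y z ∈ Sᗮ := by
      rw [Submodule.mem_orthogonal]
      intro t ht
      rw [real_inner_comm, inner_cross]
      exact hΦ y hy z hz t ht
    let L : S →ₗ[ℝ] ↥(Sᗮ) :=
      { toFun := fun s => ⟨cross7 x s.1, by
          rw [Submodule.mem_orthogonal]
          intro t ht
          rw [real_inner_comm, inner_cross]
          exact hΦ x hx s.1 s.2 t ht⟩
        map_add' := fun s t => by
          apply Subtype.ext
          show cross7 x (s.1 + t.1) = cross7 x s.1 + cross7 x t.1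
          exact cross7_add2 x s.1 t.1
        map_smul' := fun c s => by
          apply Subtype.ext
          show cross7 x (c • s.1) = c • cross7 x s.1
          exact cross7_smul2 c x s.1 }
    have hker : LinearMap.ker L ≤ Submodule.span ℝ {(⟨x, hx⟩ : S)} := by
      intro s hs
      have h1 : cross7 x s.1 = 0 := congrArg Subtype.val (LinearMap.mem_ker.mp hs)
      have h2 := cross7_cross7 x s.1
      rw [h1, cross7_zero2] at h2
      have hxx : ⟪x, x⟫ ≠ 0 := fun h => hx0 (inner_self_eq_zero.mp h)
      have h4 : ⟪x, s.1⟫ • x = ⟪x, x⟫ • s.1 := sub_eq_zero.mp h2.symm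
      have h3 : s.1 = (⟪x, s.1⟫ / ⟪x, x⟫) • x := by
        calc s.1 = (⟪x, x⟫)⁻¹ • (⟪x, x⟫ • s.1) := by
              rw [smul_smul, inv_mul_cancel₀ hxx, one_smul]
        _ = (⟪x, x⟫)⁻¹ • (⟪x, s.1⟫ • x) := by rw [h4]
        _ = (⟪x, s.1⟫ / ⟪x, x⟫) • x := by rw [smul_smul, div_eq_mul_inv, mul_comm]
      rw [Submodule.mem_span_singleton]
      exact ⟨⟪x, s.1⟫ / ⟪x, x⟫, Subtype.ext h3.symm⟩
    have hxS : (⟨x, hx⟩ : S) ≠ 0 := by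
      intro h
      exact hx0 (by simpa using congrArg Subtype.val h)
    have hk1 : Module.finrank ℝ (LinearMap.ker L) ≤ 1 := by
      have := Submodule.finrank_mono hker
      rwa [finrank_span_singleton hxS] at this
    have hr := LinearMap.finrank_range_add_finrank_ker L
    rw [hS] at hr
    have horto : Module.finrank ℝ ↥(Sᗮ) = 3 := by
      have h7 := Submodule.finrank_add_finrank_orthogonal (K := S)
      rw [hS, finrank_euclideanSpace_fin] at h7
      omega
    have hle : Module.finrank ℝ (LinearMap.range L) ≤ 3 := by
      rw [← horto]; exact Submodule.finrank_le _
    have hrange : LinearMap.range L = ⊤ := Submodule.eq_top_of_finrank_eq (by omega)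
    obtain ⟨s, hs⟩ := LinearMap.range_eq_top.mp hrange ⟨cross7 y z, huS⟩
    have hval : cross7 x s.1 = cross7 y z := congrArg Subtype.val hs
    rw [chi7_eq]
    have hA : cross7 x (cross7 y z) = ⟪x, s.1⟫ • x - ⟪x, x⟫ • s.1 := by
      rw [← hval, cross7_cross7]
    rw [hA]
    exact S.sub_mem (S.add_mem (S.sub_mem (S.smul_mem _ hx) (S.smul_mem _ s.2))
      (S.smul_mem _ hz)) (S.smul_mem _ hy)
  · intro hχ x hx y hy z hz
    let b := (stdOrthonormalBasis ℝ ↥S).reindex (finCongr hS)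
    let g : Fin 4 → E7 := fun i => (b i : E7)
    have hgmem : ∀ i, g i ∈ S := fun i => (b i).2
    have hinner : ∀ i j, ⟪g i, g j⟫ = if i = j then (1:ℝ) else 0 := by
      intro i j
      have h := orthonormal_iff_ite.mp b.orthonormal i j
      rw [Submodule.coe_inner] at h
      exact h
    have hspan : Submodule.span ℝ (Set.range g) = S := by
      apply le_antisymm
      · rw [Submodule.span_le]; rintro _ ⟨i, rfl⟩; exact hgmem i
      · intro w hw
        have hrep := b.sum_repr ⟨w, hw⟩
        have hcoe : w = ∑ i, b.repr ⟨w, hw⟩ i • g i := by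
          conv_lhs => rw [show w = ((⟨w, hw⟩ : S) : E7) from rfl, ← hrep]
          push_cast
          rfl
        rw [hcoe]
        exact Submodule.sum_mem _ fun i _ =>
          Submodule.smul_mem _ _ (Submodule.subset_span ⟨i, rfl⟩)
    have h0 : ∀ i j k, phi7 (g i) (g j) (g k) = 0 := by
      intro i j k
      by_cases hij : i = j
      · rw [hij]; exact phi7_rep12 _ _
      by_cases hik : i = k
      · rw [hik]; exact phi7_rep13 _ _
      by_cases hjk : j = k
      · rw [hjk]; exact phi7_rep23 _ _
      obtain ⟨m, hmi, hmj, hmk⟩ := fin4_m i j k hij hik hjk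
      apply vanish S hχ (g i) (g j) (g k) (g m) (hgmem i) (hgmem j) (hgmem k) (hgmem m)
      · rw [hinner, if_neg hij]
      · rw [hinner, if_neg hik]
      · rw [hinner, if_neg (fun h => hmi h.symm)]
      · rw [hinner, if_neg hmj]
      · rw [hinner, if_neg hmk]
      · rw [hinner, if_pos rfl]
      · rw [hinner, if_pos rfl]
      · intro w hw hwa hwb hwc hwd
        rw [← hspan] at hw
        obtain ⟨cw, hcw⟩ := (Submodule.mem_span_range_iff_exists_fun ℝ).mp hw
        have hww : ⟪w, w⟫ = 0 := by
          have h5 : ⟪w, w⟫ = ⟪∑ i, cw i • g i, w⟫ := by rw [hcw]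
          rw [h5, sum_inner]
          apply Finset.sum_eq_zero
          intro t _
          rw [real_inner_smul_left]
          rcases fin4_t i j k m t hij hik hjk hmi hmj hmk with h | h | h | h <;> rw [h]
          · rw [hwa]; ring
          · rw [hwb]; ring
          · rw [hwc]; ring
          · rw [hwd]; ring
        exact inner_self_eq_zero.mp hww
    rw [← hspan] at hx hy hz
    obtain ⟨cx, hcx⟩ := (Submodule.mem_span_range_iff_exists_fun ℝ).mp hx
    obtain ⟨cy, hcy⟩ := (Submodule.mem_span_range_iff_exists_fun ℝ).mp hy
    obtain ⟨cz, hcz⟩ := (Submodule.mem_span_range_iff_exists_fun ℝ).mp hz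
    rw [← hcx, ← hcy, ← hcz]
    exact phi7_expand g cx cy cz h0

/-- Pointwise form of Proposition 2.11: a 4-dimensional subspace `S ⊆ ℝ⁷` is coassociative
(`φ` vanishes on `S`) if and only if `S` is closed under `χ`. -/
theorem prop_2_11 (S : Submodule ℝ E7) (hS : Module.finrank ℝ S = 4) :
    (∀ x ∈ S, ∀ y ∈ S, ∀ z ∈ S, phi7 x y z = 0) ↔
    (∀ x ∈ S, ∀ y ∈ S, ∀ z ∈ S, chi7 x y z ∈ S) := by
  exact prop_2_11_aux S hS
end
end

section
/- (Key trace identity in the proof of Theorem 2.14) For any alternating 3-form η on ℝ⁷, define η̂_{pq} = Σ_{i,j=1}^7 η_{pij} φ_{qij} and h_{il} = (1/4)(η̂_{il} + η̂_{li}) − (1/18)(Σ_{m=1}^7 η̂_{mm}) δ_{il}. Then h₁₁ + h₂₂ + h₃₃ = 2 η₁₂₃. (Here span{e₁,e₂,e₃} is the standard associative 3-plane for φ.) -/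
set_option maxHeartbeats 4000000


open scoped RealInnerProductSpace


noncomputable section

/-- `η̂_{pq} = Σ_{i,j} η_{pij} φ_{qij}`. -/
def etaHat (η : AlternatingMap ℝ E7 ℝ (Fin 3)) (p q : Fin 7) : ℝ :=
  ∑ i, ∑ j, η ![e7 p, e7 i, e7 j] * phiC q i j

/-- The symmetric tensor `h` determined by `η` via Lemma 2.13. -/
def hEta (η : AlternatingMap ℝ E7 ℝ (Fin 3)) (i l : Fin 7) : ℝ :=
  (1/4 : ℝ) * (etaHat η i l + etaHat η l i)
    - (1/18 : ℝ) * (∑ m, etaHat η m m) * kd7 i l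

/-- Key trace identity in the proof of Theorem 2.14: the tangential trace of `h`
over the standard associative 3-plane `span{e₁,e₂,e₃}` equals `2 η₁₂₃`. -/
theorem trace_identity_assoc (η : AlternatingMap ℝ E7 ℝ (Fin 3)) :
    hEta η 0 0 + hEta η 1 1 + hEta η 2 2 = 2 * η ![e7 0, e7 1, e7 2] := by
  have hsw12 : ∀ x y z : E7, η ![x,z,y] = -η ![x,y,z] := by
    intro x y z
    have h := η.map_swap (v := ![x,y,z]) (i := (1:Fin 3)) (j := 2) (by decide)
    have e : ![x,y,z] ∘ Equiv.swap (1:Fin 3) 2 = ![x,z,y] := by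
      funext i; fin_cases i <;> simp [Equiv.swap_apply_def]
    rw [e] at h; linarith
  have hsw01 : ∀ x y z : E7, η ![y,x,z] = -η ![x,y,z] := by
    intro x y z
    have h := η.map_swap (v := ![x,y,z]) (i := (0:Fin 3)) (j := 1) (by decide)
    have e : ![x,y,z] ∘ Equiv.swap (0:Fin 3) 1 = ![y,x,z] := by
      funext i; fin_cases i <;> simp [Equiv.swap_apply_def]
    rw [e] at h; linarith
  simp only [hEta, etaHat, kd7, Fin.sum_univ_seven]
  simp (config := { decide := true }) [phiC, trip7, kd7, Matrix.det_fin_three, Matrix.vecHead, Matrix.vecTail]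
  linarith [hsw12 (e7 0) (e7 1) (e7 2),
    hsw01 (e7 0) (e7 1) (e7 2),
    hsw12 (e7 1) (e7 0) (e7 2),
    hsw01 (e7 0) (e7 2) (e7 1),
    hsw12 (e7 2) (e7 0) (e7 1),
    hsw12 (e7 0) (e7 3) (e7 4),
    hsw01 (e7 0) (e7 3) (e7 4),
    hsw12 (e7 3) (e7 0) (e7 4),
    hsw01 (e7 0) (e7 4) (e7 3),
    hsw12 (e7 4) (e7 0) (e7 3),
    hsw12 (e7 0) (e7 5) (e7 6),
    hsw01 (e7 0) (e7 5) (e7 6),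
    hsw12 (e7 5) (e7 0) (e7 6),
    hsw01 (e7 0) (e7 6) (e7 5),
    hsw12 (e7 6) (e7 0) (e7 5),
    hsw12 (e7 1) (e7 3) (e7 5),
    hsw01 (e7 1) (e7 3) (e7 5),
    hsw12 (e7 3) (e7 1) (e7 5),
    hsw01 (e7 1) (e7 5) (e7 3),
    hsw12 (e7 5) (e7 1) (e7 3),
    hsw12 (e7 1) (e7 6) (e7 4),
    hsw01 (e7 1) (e7 6) (e7 4),
    hsw12 (e7 6) (e7 1) (e7 4),
    hsw01 (e7 1) (e7 4) (e7 6),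
    hsw12 (e7 4) (e7 1) (e7 6),
    hsw12 (e7 2) (e7 3) (e7 6),
    hsw01 (e7 2) (e7 3) (e7 6),
    hsw12 (e7 3) (e7 2) (e7 6),
    hsw01 (e7 2) (e7 6) (e7 3),
    hsw12 (e7 6) (e7 2) (e7 3),
    hsw12 (e7 2) (e7 4) (e7 5),
    hsw01 (e7 2) (e7 4) (e7 5),
    hsw12 (e7 4) (e7 2) (e7 5),
    hsw01 (e7 2) (e7 5) (e7 4),
    hsw12 (e7 5) (e7 2) (e7 4)]
end
end

section
/- (Key trace identity in the proof of Theorem 2.18) For any alternating 4-form ρ on ℝ⁷, define ρ̂_{pq} = Σ_{i,j,k=1}^7 ρ_{pijk} ψ_{qijk} and h_{il} = (1/12)(ρ̂_{il} + ρ̂_{li}) − (1/48)(Σ_{m=1}^7 ρ̂_{mm}) δ_{il}. Then h₄₄ + h₅₅ + h₆₆ + h₇₇ = 2 ρ₄₅₆₇. (Here span{e₄,e₅,e₆,e₇} is the standard coassociative 4-plane.) -/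
open scoped RealInnerProductSpace

noncomputable section

/-- The symmetric tensor `h` determined by `ρ` via Lemma 2.17. -/
def hRho (ρ : AlternatingMap ℝ E7 ℝ (Fin 4)) (i l : Fin 7) : ℝ :=
  (1/12 : ℝ) * (rhoHat ρ i l + rhoHat ρ l i)
    - (1/48 : ℝ) * (∑ m, rhoHat ρ m m) * kd7 i l

lemma kd7_00 : kd7 0 0 = 1 := by simp (config := { decide := true }) [kd7]
lemma kd7_01 : kd7 0 1 = 0 := by simp (config := { decide := true }) [kd7]
lemma kd7_02 : kd7 0 2 = 0 := by simp (config := { decide := true }) [kd7]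
lemma kd7_03 : kd7 0 3 = 0 := by simp (config := { decide := true }) [kd7]
lemma kd7_04 : kd7 0 4 = 0 := by simp (config := { decide := true }) [kd7]
lemma kd7_05 : kd7 0 5 = 0 := by simp (config := { decide := true }) [kd7]
lemma kd7_06 : kd7 0 6 = 0 := by simp (config := { decide := true }) [kd7]
lemma kd7_10 : kd7 1 0 = 0 := by simp (config := { decide := true }) [kd7]
lemma kd7_11 : kd7 1 1 = 1 := by simp (config := { decide := true }) [kd7]
lemma kd7_12 : kd7 1 2 = 0 := by simp (config := { decide := true }) [kd7]
lemma kd7_13 : kd7 1 3 = 0 := by simp (config := { decide := true }) [kd7]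
lemma kd7_14 : kd7 1 4 = 0 := by simp (config := { decide := true }) [kd7]
lemma kd7_15 : kd7 1 5 = 0 := by simp (config := { decide := true }) [kd7]
lemma kd7_16 : kd7 1 6 = 0 := by simp (config := { decide := true }) [kd7]
lemma kd7_20 : kd7 2 0 = 0 := by simp (config := { decide := true }) [kd7]
lemma kd7_21 : kd7 2 1 = 0 := by simp (config := { decide := true }) [kd7]
lemma kd7_22 : kd7 2 2 = 1 := by simp (config := { decide := true }) [kd7]
lemma kd7_23 : kd7 2 3 = 0 := by simp (config := { decide := true }) [kd7]
lemma kd7_24 : kd7 2 4 = 0 := by simp (config := { decide := true }) [kd7]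
lemma kd7_25 : kd7 2 5 = 0 := by simp (config := { decide := true }) [kd7]
lemma kd7_26 : kd7 2 6 = 0 := by simp (config := { decide := true }) [kd7]
lemma kd7_30 : kd7 3 0 = 0 := by simp (config := { decide := true }) [kd7]
lemma kd7_31 : kd7 3 1 = 0 := by simp (config := { decide := true }) [kd7]
lemma kd7_32 : kd7 3 2 = 0 := by simp (config := { decide := true }) [kd7]
lemma kd7_33 : kd7 3 3 = 1 := by simp (config := { decide := true }) [kd7]
lemma kd7_34 : kd7 3 4 = 0 := by simp (config := { decide := true }) [kd7]
lemma kd7_35 : kd7 3 5 = 0 := by simp (config := { decide := true }) [kd7]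
lemma kd7_36 : kd7 3 6 = 0 := by simp (config := { decide := true }) [kd7]
lemma kd7_40 : kd7 4 0 = 0 := by simp (config := { decide := true }) [kd7]
lemma kd7_41 : kd7 4 1 = 0 := by simp (config := { decide := true }) [kd7]
lemma kd7_42 : kd7 4 2 = 0 := by simp (config := { decide := true }) [kd7]
lemma kd7_43 : kd7 4 3 = 0 := by simp (config := { decide := true }) [kd7]
lemma kd7_44 : kd7 4 4 = 1 := by simp (config := { decide := true }) [kd7]
lemma kd7_45 : kd7 4 5 = 0 := by simp (config := { decide := true }) [kd7]
lemma kd7_46 : kd7 4 6 = 0 := by simp (config := { decide := true }) [kd7]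
lemma kd7_50 : kd7 5 0 = 0 := by simp (config := { decide := true }) [kd7]
lemma kd7_51 : kd7 5 1 = 0 := by simp (config := { decide := true }) [kd7]
lemma kd7_52 : kd7 5 2 = 0 := by simp (config := { decide := true }) [kd7]
lemma kd7_53 : kd7 5 3 = 0 := by simp (config := { decide := true }) [kd7]
lemma kd7_54 : kd7 5 4 = 0 := by simp (config := { decide := true }) [kd7]
lemma kd7_55 : kd7 5 5 = 1 := by simp (config := { decide := true }) [kd7]
lemma kd7_56 : kd7 5 6 = 0 := by simp (config := { decide := true }) [kd7]
lemma kd7_60 : kd7 6 0 = 0 := by simp (config := { decide := true }) [kd7]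
lemma kd7_61 : kd7 6 1 = 0 := by simp (config := { decide := true }) [kd7]
lemma kd7_62 : kd7 6 2 = 0 := by simp (config := { decide := true }) [kd7]
lemma kd7_63 : kd7 6 3 = 0 := by simp (config := { decide := true }) [kd7]
lemma kd7_64 : kd7 6 4 = 0 := by simp (config := { decide := true }) [kd7]
lemma kd7_65 : kd7 6 5 = 0 := by simp (config := { decide := true }) [kd7]
lemma kd7_66 : kd7 6 6 = 1 := by simp (config := { decide := true }) [kd7]

lemma collapse3 (x y z : Fin 7) (f : Fin 7 → Fin 7 → Fin 7 → ℝ) :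
    (∑ i, ∑ j, ∑ k, f i j k * trip7 x y z i j k) =
      f x y z - f x z y - f y x z + f y z x + f z x y - f z y x := by
  have h : ∀ (a b c : Fin 7), (∑ i, ∑ j, ∑ k, f i j k * (kd7 a i * kd7 b j * kd7 c k)) = f a b c := by
    intro a b c
    simp [kd7, mul_ite, ite_mul, Finset.sum_ite_eq, Finset.mul_sum]
  calc (∑ i, ∑ j, ∑ k, f i j k * trip7 x y z i j k)
      = ∑ i, ∑ j, ∑ k, (f i j k * (kd7 x i * kd7 y j * kd7 z k)
          - f i j k * (kd7 x i * kd7 z j * kd7 y k)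
          - f i j k * (kd7 y i * kd7 x j * kd7 z k)
          + f i j k * (kd7 y i * kd7 z j * kd7 x k)
          + f i j k * (kd7 z i * kd7 x j * kd7 y k)
          - f i j k * (kd7 z i * kd7 y j * kd7 x k)) := by
        refine Finset.sum_congr rfl fun i _ => Finset.sum_congr rfl fun j _ =>
          Finset.sum_congr rfl fun k _ => ?_
        rw [trip7, Matrix.det_fin_three]
        norm_num [Matrix.cons_val_zero, Matrix.cons_val_one, Matrix.head_cons,
          Matrix.cons_val_two, Matrix.tail_cons, Matrix.head_fin_const]
        ring
    _ = _ := by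
        simp only [Finset.sum_sub_distrib, Finset.sum_add_distrib, h]

lemma quad_expand (a b c d q i j k : Fin 7) :
    quad7 a b c d q i j k =
      kd7 a q * trip7 b c d i j k - kd7 b q * trip7 a c d i j k
      + kd7 c q * trip7 a b d i j k - kd7 d q * trip7 a b c i j k := by
  rw [quad7, Matrix.det_succ_column_zero, Fin.sum_univ_four]
  have h0 : (!![kd7 a q, kd7 a i, kd7 a j, kd7 a k;
                kd7 b q, kd7 b i, kd7 b j, kd7 b k;
                kd7 c q, kd7 c i, kd7 c j, kd7 c k;
                kd7 d q, kd7 d i, kd7 d j, kd7 d k].submatrix (Fin.succAbove 0) Fin.succ)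
      = !![kd7 b i, kd7 b j, kd7 b k; kd7 c i, kd7 c j, kd7 c k; kd7 d i, kd7 d j, kd7 d k] := by
    ext x y; fin_cases x <;> fin_cases y <;> rfl
  have h1 : (!![kd7 a q, kd7 a i, kd7 a j, kd7 a k;
                kd7 b q, kd7 b i, kd7 b j, kd7 b k;
                kd7 c q, kd7 c i, kd7 c j, kd7 c k;
                kd7 d q, kd7 d i, kd7 d j, kd7 d k].submatrix (Fin.succAbove 1) Fin.succ)
      = !![kd7 a i, kd7 a j, kd7 a k; kd7 c i, kd7 c j, kd7 c k; kd7 d i, kd7 d j, kd7 d k] := by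
    ext x y; fin_cases x <;> fin_cases y <;> rfl
  have h2 : (!![kd7 a q, kd7 a i, kd7 a j, kd7 a k;
                kd7 b q, kd7 b i, kd7 b j, kd7 b k;
                kd7 c q, kd7 c i, kd7 c j, kd7 c k;
                kd7 d q, kd7 d i, kd7 d j, kd7 d k].submatrix (Fin.succAbove 2) Fin.succ)
      = !![kd7 a i, kd7 a j, kd7 a k; kd7 b i, kd7 b j, kd7 b k; kd7 d i, kd7 d j, kd7 d k] := by
    ext x y; fin_cases x <;> fin_cases y <;> rfl
  have h3 : (!![kd7 a q, kd7 a i, kd7 a j, kd7 a k;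
                kd7 b q, kd7 b i, kd7 b j, kd7 b k;
                kd7 c q, kd7 c i, kd7 c j, kd7 c k;
                kd7 d q, kd7 d i, kd7 d j, kd7 d k].submatrix (Fin.succAbove 3) Fin.succ)
      = !![kd7 a i, kd7 a j, kd7 a k; kd7 b i, kd7 b j, kd7 b k; kd7 c i, kd7 c j, kd7 c k] := by
    ext x y; fin_cases x <;> fin_cases y <;> rfl
  rw [h0, h1, h2, h3, trip7, trip7, trip7, trip7]
  norm_num [Matrix.cons_val_zero, Matrix.cons_val_one, Matrix.head_cons,
    Matrix.cons_val_two, Matrix.cons_val_three, Matrix.tail_cons,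
    show ((3:Fin 4):ℕ) = 3 from rfl]
  ring

lemma sw01 (ρ : AlternatingMap ℝ E7 ℝ (Fin 4)) (a b c d : E7) : ρ ![b, a, c, d] = -ρ ![a, b, c, d] := by
  have h := ρ.map_swap ![a, b, c, d] (show (0:Fin 4) ≠ 1 by decide)
  rw [show (![a, b, c, d] ∘ Equiv.swap (0:Fin 4) 1) = ![b, a, c, d] from by
    funext i; fin_cases i <;> simp [Equiv.swap_apply_def]] at h
  rw [h]

lemma sw12 (ρ : AlternatingMap ℝ E7 ℝ (Fin 4)) (a b c d : E7) : ρ ![a, c, b, d] = -ρ ![a, b, c, d] := by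
  have h := ρ.map_swap ![a, b, c, d] (show (1:Fin 4) ≠ 2 by decide)
  rw [show (![a, b, c, d] ∘ Equiv.swap (1:Fin 4) 2) = ![a, c, b, d] from by
    funext i; fin_cases i <;> simp [Equiv.swap_apply_def]] at h
  rw [h]

lemma sw23 (ρ : AlternatingMap ℝ E7 ℝ (Fin 4)) (a b c d : E7) : ρ ![a, b, d, c] = -ρ ![a, b, c, d] := by
  have h := ρ.map_swap ![a, b, c, d] (show (2:Fin 4) ≠ 3 by decide)
  rw [show (![a, b, c, d] ∘ Equiv.swap (2:Fin 4) 3) = ![a, b, d, c] from by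
    funext i; fin_cases i <;> simp [Equiv.swap_apply_def]] at h
  rw [h]

lemma canon_3465 (ρ : AlternatingMap ℝ E7 ℝ (Fin 4)) : ρ ![e7 3, e7 4, e7 6, e7 5] = -ρ ![e7 3, e7 4, e7 5, e7 6] := by
  rw [sw23]; try ring
lemma canon_3546 (ρ : AlternatingMap ℝ E7 ℝ (Fin 4)) : ρ ![e7 3, e7 5, e7 4, e7 6] = -ρ ![e7 3, e7 4, e7 5, e7 6] := by
  rw [sw12]; try ring
lemma canon_3564 (ρ : AlternatingMap ℝ E7 ℝ (Fin 4)) : ρ ![e7 3, e7 5, e7 6, e7 4] = ρ ![e7 3, e7 4, e7 5, e7 6] := by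
  rw [sw23, sw12]; try ring
lemma canon_3645 (ρ : AlternatingMap ℝ E7 ℝ (Fin 4)) : ρ ![e7 3, e7 6, e7 4, e7 5] = ρ ![e7 3, e7 4, e7 5, e7 6] := by
  rw [sw12, sw23]; try ring
lemma canon_3654 (ρ : AlternatingMap ℝ E7 ℝ (Fin 4)) : ρ ![e7 3, e7 6, e7 5, e7 4] = -ρ ![e7 3, e7 4, e7 5, e7 6] := by
  rw [sw12, sw23, sw12]; try ring
lemma canon_4356 (ρ : AlternatingMap ℝ E7 ℝ (Fin 4)) : ρ ![e7 4, e7 3, e7 5, e7 6] = -ρ ![e7 3, e7 4, e7 5, e7 6] := by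
  rw [sw01]; try ring
lemma canon_4365 (ρ : AlternatingMap ℝ E7 ℝ (Fin 4)) : ρ ![e7 4, e7 3, e7 6, e7 5] = ρ ![e7 3, e7 4, e7 5, e7 6] := by
  rw [sw01, sw23]; try ring
lemma canon_4536 (ρ : AlternatingMap ℝ E7 ℝ (Fin 4)) : ρ ![e7 4, e7 5, e7 3, e7 6] = ρ ![e7 3, e7 4, e7 5, e7 6] := by
  rw [sw12, sw01]; try ring
lemma canon_4563 (ρ : AlternatingMap ℝ E7 ℝ (Fin 4)) : ρ ![e7 4, e7 5, e7 6, e7 3] = -ρ ![e7 3, e7 4, e7 5, e7 6] := by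
  rw [sw23, sw12, sw01]; try ring
lemma canon_4635 (ρ : AlternatingMap ℝ E7 ℝ (Fin 4)) : ρ ![e7 4, e7 6, e7 3, e7 5] = -ρ ![e7 3, e7 4, e7 5, e7 6] := by
  rw [sw12, sw01, sw23]; try ring
lemma canon_4653 (ρ : AlternatingMap ℝ E7 ℝ (Fin 4)) : ρ ![e7 4, e7 6, e7 5, e7 3] = ρ ![e7 3, e7 4, e7 5, e7 6] := by
  rw [sw12, sw23, sw12, sw01]; try ring
lemma canon_5346 (ρ : AlternatingMap ℝ E7 ℝ (Fin 4)) : ρ ![e7 5, e7 3, e7 4, e7 6] = ρ ![e7 3, e7 4, e7 5, e7 6] := by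
  rw [sw01, sw12]; try ring
lemma canon_5364 (ρ : AlternatingMap ℝ E7 ℝ (Fin 4)) : ρ ![e7 5, e7 3, e7 6, e7 4] = -ρ ![e7 3, e7 4, e7 5, e7 6] := by
  rw [sw01, sw23, sw12]; try ring
lemma canon_5436 (ρ : AlternatingMap ℝ E7 ℝ (Fin 4)) : ρ ![e7 5, e7 4, e7 3, e7 6] = -ρ ![e7 3, e7 4, e7 5, e7 6] := by
  rw [sw01, sw12, sw01]; try ring
lemma canon_5463 (ρ : AlternatingMap ℝ E7 ℝ (Fin 4)) : ρ ![e7 5, e7 4, e7 6, e7 3] = ρ ![e7 3, e7 4, e7 5, e7 6] := by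
  rw [sw01, sw23, sw12, sw01]; try ring
lemma canon_5634 (ρ : AlternatingMap ℝ E7 ℝ (Fin 4)) : ρ ![e7 5, e7 6, e7 3, e7 4] = ρ ![e7 3, e7 4, e7 5, e7 6] := by
  rw [sw12, sw01, sw23, sw12]; try ring
lemma canon_5643 (ρ : AlternatingMap ℝ E7 ℝ (Fin 4)) : ρ ![e7 5, e7 6, e7 4, e7 3] = -ρ ![e7 3, e7 4, e7 5, e7 6] := by
  rw [sw12, sw01, sw23, sw12, sw01]; try ring
lemma canon_6345 (ρ : AlternatingMap ℝ E7 ℝ (Fin 4)) : ρ ![e7 6, e7 3, e7 4, e7 5] = -ρ ![e7 3, e7 4, e7 5, e7 6] := by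
  rw [sw01, sw12, sw23]; try ring
lemma canon_6354 (ρ : AlternatingMap ℝ E7 ℝ (Fin 4)) : ρ ![e7 6, e7 3, e7 5, e7 4] = ρ ![e7 3, e7 4, e7 5, e7 6] := by
  rw [sw01, sw12, sw23, sw12]; try ring
lemma canon_6435 (ρ : AlternatingMap ℝ E7 ℝ (Fin 4)) : ρ ![e7 6, e7 4, e7 3, e7 5] = ρ ![e7 3, e7 4, e7 5, e7 6] := by
  rw [sw01, sw12, sw01, sw23]; try ring
lemma canon_6453 (ρ : AlternatingMap ℝ E7 ℝ (Fin 4)) : ρ ![e7 6, e7 4, e7 5, e7 3] = -ρ ![e7 3, e7 4, e7 5, e7 6] := by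
  rw [sw01, sw12, sw23, sw12, sw01]; try ring
lemma canon_6534 (ρ : AlternatingMap ℝ E7 ℝ (Fin 4)) : ρ ![e7 6, e7 5, e7 3, e7 4] = -ρ ![e7 3, e7 4, e7 5, e7 6] := by
  rw [sw01, sw12, sw01, sw23, sw12]; try ring
lemma canon_6543 (ρ : AlternatingMap ℝ E7 ℝ (Fin 4)) : ρ ![e7 6, e7 5, e7 4, e7 3] = ρ ![e7 3, e7 4, e7 5, e7 6] := by
  rw [sw01, sw12, sw01, sw23, sw12, sw01]; try ring
lemma canon_1243 (ρ : AlternatingMap ℝ E7 ℝ (Fin 4)) : ρ ![e7 1, e7 2, e7 4, e7 3] = -ρ ![e7 1, e7 2, e7 3, e7 4] := by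
  rw [sw23]; try ring
lemma canon_1324 (ρ : AlternatingMap ℝ E7 ℝ (Fin 4)) : ρ ![e7 1, e7 3, e7 2, e7 4] = -ρ ![e7 1, e7 2, e7 3, e7 4] := by
  rw [sw12]; try ring
lemma canon_1342 (ρ : AlternatingMap ℝ E7 ℝ (Fin 4)) : ρ ![e7 1, e7 3, e7 4, e7 2] = ρ ![e7 1, e7 2, e7 3, e7 4] := by
  rw [sw23, sw12]; try ring
lemma canon_1423 (ρ : AlternatingMap ℝ E7 ℝ (Fin 4)) : ρ ![e7 1, e7 4, e7 2, e7 3] = ρ ![e7 1, e7 2, e7 3, e7 4] := by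
  rw [sw12, sw23]; try ring
lemma canon_1432 (ρ : AlternatingMap ℝ E7 ℝ (Fin 4)) : ρ ![e7 1, e7 4, e7 3, e7 2] = -ρ ![e7 1, e7 2, e7 3, e7 4] := by
  rw [sw12, sw23, sw12]; try ring
lemma canon_2134 (ρ : AlternatingMap ℝ E7 ℝ (Fin 4)) : ρ ![e7 2, e7 1, e7 3, e7 4] = -ρ ![e7 1, e7 2, e7 3, e7 4] := by
  rw [sw01]; try ring
lemma canon_2143 (ρ : AlternatingMap ℝ E7 ℝ (Fin 4)) : ρ ![e7 2, e7 1, e7 4, e7 3] = ρ ![e7 1, e7 2, e7 3, e7 4] := by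
  rw [sw01, sw23]; try ring
lemma canon_2314 (ρ : AlternatingMap ℝ E7 ℝ (Fin 4)) : ρ ![e7 2, e7 3, e7 1, e7 4] = ρ ![e7 1, e7 2, e7 3, e7 4] := by
  rw [sw12, sw01]; try ring
lemma canon_2341 (ρ : AlternatingMap ℝ E7 ℝ (Fin 4)) : ρ ![e7 2, e7 3, e7 4, e7 1] = -ρ ![e7 1, e7 2, e7 3, e7 4] := by
  rw [sw23, sw12, sw01]; try ring
lemma canon_2413 (ρ : AlternatingMap ℝ E7 ℝ (Fin 4)) : ρ ![e7 2, e7 4, e7 1, e7 3] = -ρ ![e7 1, e7 2, e7 3, e7 4] := by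
  rw [sw12, sw01, sw23]; try ring
lemma canon_2431 (ρ : AlternatingMap ℝ E7 ℝ (Fin 4)) : ρ ![e7 2, e7 4, e7 3, e7 1] = ρ ![e7 1, e7 2, e7 3, e7 4] := by
  rw [sw12, sw23, sw12, sw01]; try ring
lemma canon_3124 (ρ : AlternatingMap ℝ E7 ℝ (Fin 4)) : ρ ![e7 3, e7 1, e7 2, e7 4] = ρ ![e7 1, e7 2, e7 3, e7 4] := by
  rw [sw01, sw12]; try ring
lemma canon_3142 (ρ : AlternatingMap ℝ E7 ℝ (Fin 4)) : ρ ![e7 3, e7 1, e7 4, e7 2] = -ρ ![e7 1, e7 2, e7 3, e7 4] := by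
  rw [sw01, sw23, sw12]; try ring
lemma canon_3214 (ρ : AlternatingMap ℝ E7 ℝ (Fin 4)) : ρ ![e7 3, e7 2, e7 1, e7 4] = -ρ ![e7 1, e7 2, e7 3, e7 4] := by
  rw [sw01, sw12, sw01]; try ring
lemma canon_3241 (ρ : AlternatingMap ℝ E7 ℝ (Fin 4)) : ρ ![e7 3, e7 2, e7 4, e7 1] = ρ ![e7 1, e7 2, e7 3, e7 4] := by
  rw [sw01, sw23, sw12, sw01]; try ring
lemma canon_3412 (ρ : AlternatingMap ℝ E7 ℝ (Fin 4)) : ρ ![e7 3, e7 4, e7 1, e7 2] = ρ ![e7 1, e7 2, e7 3, e7 4] := by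
  rw [sw12, sw01, sw23, sw12]; try ring
lemma canon_3421 (ρ : AlternatingMap ℝ E7 ℝ (Fin 4)) : ρ ![e7 3, e7 4, e7 2, e7 1] = -ρ ![e7 1, e7 2, e7 3, e7 4] := by
  rw [sw12, sw01, sw23, sw12, sw01]; try ring
lemma canon_4123 (ρ : AlternatingMap ℝ E7 ℝ (Fin 4)) : ρ ![e7 4, e7 1, e7 2, e7 3] = -ρ ![e7 1, e7 2, e7 3, e7 4] := by
  rw [sw01, sw12, sw23]; try ring
lemma canon_4132 (ρ : AlternatingMap ℝ E7 ℝ (Fin 4)) : ρ ![e7 4, e7 1, e7 3, e7 2] = ρ ![e7 1, e7 2, e7 3, e7 4] := by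
  rw [sw01, sw12, sw23, sw12]; try ring
lemma canon_4213 (ρ : AlternatingMap ℝ E7 ℝ (Fin 4)) : ρ ![e7 4, e7 2, e7 1, e7 3] = ρ ![e7 1, e7 2, e7 3, e7 4] := by
  rw [sw01, sw12, sw01, sw23]; try ring
lemma canon_4231 (ρ : AlternatingMap ℝ E7 ℝ (Fin 4)) : ρ ![e7 4, e7 2, e7 3, e7 1] = -ρ ![e7 1, e7 2, e7 3, e7 4] := by
  rw [sw01, sw12, sw23, sw12, sw01]; try ring
lemma canon_4312 (ρ : AlternatingMap ℝ E7 ℝ (Fin 4)) : ρ ![e7 4, e7 3, e7 1, e7 2] = -ρ ![e7 1, e7 2, e7 3, e7 4] := by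
  rw [sw01, sw12, sw01, sw23, sw12]; try ring
lemma canon_4321 (ρ : AlternatingMap ℝ E7 ℝ (Fin 4)) : ρ ![e7 4, e7 3, e7 2, e7 1] = ρ ![e7 1, e7 2, e7 3, e7 4] := by
  rw [sw01, sw12, sw01, sw23, sw12, sw01]; try ring
lemma canon_1265 (ρ : AlternatingMap ℝ E7 ℝ (Fin 4)) : ρ ![e7 1, e7 2, e7 6, e7 5] = -ρ ![e7 1, e7 2, e7 5, e7 6] := by
  rw [sw23]; try ring
lemma canon_1526 (ρ : AlternatingMap ℝ E7 ℝ (Fin 4)) : ρ ![e7 1, e7 5, e7 2, e7 6] = -ρ ![e7 1, e7 2, e7 5, e7 6] := by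
  rw [sw12]; try ring
lemma canon_1562 (ρ : AlternatingMap ℝ E7 ℝ (Fin 4)) : ρ ![e7 1, e7 5, e7 6, e7 2] = ρ ![e7 1, e7 2, e7 5, e7 6] := by
  rw [sw23, sw12]; try ring
lemma canon_1625 (ρ : AlternatingMap ℝ E7 ℝ (Fin 4)) : ρ ![e7 1, e7 6, e7 2, e7 5] = ρ ![e7 1, e7 2, e7 5, e7 6] := by
  rw [sw12, sw23]; try ring
lemma canon_1652 (ρ : AlternatingMap ℝ E7 ℝ (Fin 4)) : ρ ![e7 1, e7 6, e7 5, e7 2] = -ρ ![e7 1, e7 2, e7 5, e7 6] := by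
  rw [sw12, sw23, sw12]; try ring
lemma canon_2156 (ρ : AlternatingMap ℝ E7 ℝ (Fin 4)) : ρ ![e7 2, e7 1, e7 5, e7 6] = -ρ ![e7 1, e7 2, e7 5, e7 6] := by
  rw [sw01]; try ring
lemma canon_2165 (ρ : AlternatingMap ℝ E7 ℝ (Fin 4)) : ρ ![e7 2, e7 1, e7 6, e7 5] = ρ ![e7 1, e7 2, e7 5, e7 6] := by
  rw [sw01, sw23]; try ring
lemma canon_2516 (ρ : AlternatingMap ℝ E7 ℝ (Fin 4)) : ρ ![e7 2, e7 5, e7 1, e7 6] = ρ ![e7 1, e7 2, e7 5, e7 6] := by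
  rw [sw12, sw01]; try ring
lemma canon_2561 (ρ : AlternatingMap ℝ E7 ℝ (Fin 4)) : ρ ![e7 2, e7 5, e7 6, e7 1] = -ρ ![e7 1, e7 2, e7 5, e7 6] := by
  rw [sw23, sw12, sw01]; try ring
lemma canon_2615 (ρ : AlternatingMap ℝ E7 ℝ (Fin 4)) : ρ ![e7 2, e7 6, e7 1, e7 5] = -ρ ![e7 1, e7 2, e7 5, e7 6] := by
  rw [sw12, sw01, sw23]; try ring
lemma canon_2651 (ρ : AlternatingMap ℝ E7 ℝ (Fin 4)) : ρ ![e7 2, e7 6, e7 5, e7 1] = ρ ![e7 1, e7 2, e7 5, e7 6] := by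
  rw [sw12, sw23, sw12, sw01]; try ring
lemma canon_5126 (ρ : AlternatingMap ℝ E7 ℝ (Fin 4)) : ρ ![e7 5, e7 1, e7 2, e7 6] = ρ ![e7 1, e7 2, e7 5, e7 6] := by
  rw [sw01, sw12]; try ring
lemma canon_5162 (ρ : AlternatingMap ℝ E7 ℝ (Fin 4)) : ρ ![e7 5, e7 1, e7 6, e7 2] = -ρ ![e7 1, e7 2, e7 5, e7 6] := by
  rw [sw01, sw23, sw12]; try ring
lemma canon_5216 (ρ : AlternatingMap ℝ E7 ℝ (Fin 4)) : ρ ![e7 5, e7 2, e7 1, e7 6] = -ρ ![e7 1, e7 2, e7 5, e7 6] := by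
  rw [sw01, sw12, sw01]; try ring
lemma canon_5261 (ρ : AlternatingMap ℝ E7 ℝ (Fin 4)) : ρ ![e7 5, e7 2, e7 6, e7 1] = ρ ![e7 1, e7 2, e7 5, e7 6] := by
  rw [sw01, sw23, sw12, sw01]; try ring
lemma canon_5612 (ρ : AlternatingMap ℝ E7 ℝ (Fin 4)) : ρ ![e7 5, e7 6, e7 1, e7 2] = ρ ![e7 1, e7 2, e7 5, e7 6] := by
  rw [sw12, sw01, sw23, sw12]; try ring
lemma canon_5621 (ρ : AlternatingMap ℝ E7 ℝ (Fin 4)) : ρ ![e7 5, e7 6, e7 2, e7 1] = -ρ ![e7 1, e7 2, e7 5, e7 6] := by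
  rw [sw12, sw01, sw23, sw12, sw01]; try ring
lemma canon_6125 (ρ : AlternatingMap ℝ E7 ℝ (Fin 4)) : ρ ![e7 6, e7 1, e7 2, e7 5] = -ρ ![e7 1, e7 2, e7 5, e7 6] := by
  rw [sw01, sw12, sw23]; try ring
lemma canon_6152 (ρ : AlternatingMap ℝ E7 ℝ (Fin 4)) : ρ ![e7 6, e7 1, e7 5, e7 2] = ρ ![e7 1, e7 2, e7 5, e7 6] := by
  rw [sw01, sw12, sw23, sw12]; try ring
lemma canon_6215 (ρ : AlternatingMap ℝ E7 ℝ (Fin 4)) : ρ ![e7 6, e7 2, e7 1, e7 5] = ρ ![e7 1, e7 2, e7 5, e7 6] := by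
  rw [sw01, sw12, sw01, sw23]; try ring
lemma canon_6251 (ρ : AlternatingMap ℝ E7 ℝ (Fin 4)) : ρ ![e7 6, e7 2, e7 5, e7 1] = -ρ ![e7 1, e7 2, e7 5, e7 6] := by
  rw [sw01, sw12, sw23, sw12, sw01]; try ring
lemma canon_6512 (ρ : AlternatingMap ℝ E7 ℝ (Fin 4)) : ρ ![e7 6, e7 5, e7 1, e7 2] = -ρ ![e7 1, e7 2, e7 5, e7 6] := by
  rw [sw01, sw12, sw01, sw23, sw12]; try ring
lemma canon_6521 (ρ : AlternatingMap ℝ E7 ℝ (Fin 4)) : ρ ![e7 6, e7 5, e7 2, e7 1] = ρ ![e7 1, e7 2, e7 5, e7 6] := by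
  rw [sw01, sw12, sw01, sw23, sw12, sw01]; try ring
lemma canon_0253 (ρ : AlternatingMap ℝ E7 ℝ (Fin 4)) : ρ ![e7 0, e7 2, e7 5, e7 3] = -ρ ![e7 0, e7 2, e7 3, e7 5] := by
  rw [sw23]; try ring
lemma canon_0325 (ρ : AlternatingMap ℝ E7 ℝ (Fin 4)) : ρ ![e7 0, e7 3, e7 2, e7 5] = -ρ ![e7 0, e7 2, e7 3, e7 5] := by
  rw [sw12]; try ring
lemma canon_0352 (ρ : AlternatingMap ℝ E7 ℝ (Fin 4)) : ρ ![e7 0, e7 3, e7 5, e7 2] = ρ ![e7 0, e7 2, e7 3, e7 5] := by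
  rw [sw23, sw12]; try ring
lemma canon_0523 (ρ : AlternatingMap ℝ E7 ℝ (Fin 4)) : ρ ![e7 0, e7 5, e7 2, e7 3] = ρ ![e7 0, e7 2, e7 3, e7 5] := by
  rw [sw12, sw23]; try ring
lemma canon_0532 (ρ : AlternatingMap ℝ E7 ℝ (Fin 4)) : ρ ![e7 0, e7 5, e7 3, e7 2] = -ρ ![e7 0, e7 2, e7 3, e7 5] := by
  rw [sw12, sw23, sw12]; try ring
lemma canon_2035 (ρ : AlternatingMap ℝ E7 ℝ (Fin 4)) : ρ ![e7 2, e7 0, e7 3, e7 5] = -ρ ![e7 0, e7 2, e7 3, e7 5] := by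
  rw [sw01]; try ring
lemma canon_2053 (ρ : AlternatingMap ℝ E7 ℝ (Fin 4)) : ρ ![e7 2, e7 0, e7 5, e7 3] = ρ ![e7 0, e7 2, e7 3, e7 5] := by
  rw [sw01, sw23]; try ring
lemma canon_2305 (ρ : AlternatingMap ℝ E7 ℝ (Fin 4)) : ρ ![e7 2, e7 3, e7 0, e7 5] = ρ ![e7 0, e7 2, e7 3, e7 5] := by
  rw [sw12, sw01]; try ring
lemma canon_2350 (ρ : AlternatingMap ℝ E7 ℝ (Fin 4)) : ρ ![e7 2, e7 3, e7 5, e7 0] = -ρ ![e7 0, e7 2, e7 3, e7 5] := by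
  rw [sw23, sw12, sw01]; try ring
lemma canon_2503 (ρ : AlternatingMap ℝ E7 ℝ (Fin 4)) : ρ ![e7 2, e7 5, e7 0, e7 3] = -ρ ![e7 0, e7 2, e7 3, e7 5] := by
  rw [sw12, sw01, sw23]; try ring
lemma canon_2530 (ρ : AlternatingMap ℝ E7 ℝ (Fin 4)) : ρ ![e7 2, e7 5, e7 3, e7 0] = ρ ![e7 0, e7 2, e7 3, e7 5] := by
  rw [sw12, sw23, sw12, sw01]; try ring
lemma canon_3025 (ρ : AlternatingMap ℝ E7 ℝ (Fin 4)) : ρ ![e7 3, e7 0, e7 2, e7 5] = ρ ![e7 0, e7 2, e7 3, e7 5] := by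
  rw [sw01, sw12]; try ring
lemma canon_3052 (ρ : AlternatingMap ℝ E7 ℝ (Fin 4)) : ρ ![e7 3, e7 0, e7 5, e7 2] = -ρ ![e7 0, e7 2, e7 3, e7 5] := by
  rw [sw01, sw23, sw12]; try ring
lemma canon_3205 (ρ : AlternatingMap ℝ E7 ℝ (Fin 4)) : ρ ![e7 3, e7 2, e7 0, e7 5] = -ρ ![e7 0, e7 2, e7 3, e7 5] := by
  rw [sw01, sw12, sw01]; try ring
lemma canon_3250 (ρ : AlternatingMap ℝ E7 ℝ (Fin 4)) : ρ ![e7 3, e7 2, e7 5, e7 0] = ρ ![e7 0, e7 2, e7 3, e7 5] := by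
  rw [sw01, sw23, sw12, sw01]; try ring
lemma canon_3502 (ρ : AlternatingMap ℝ E7 ℝ (Fin 4)) : ρ ![e7 3, e7 5, e7 0, e7 2] = ρ ![e7 0, e7 2, e7 3, e7 5] := by
  rw [sw12, sw01, sw23, sw12]; try ring
lemma canon_3520 (ρ : AlternatingMap ℝ E7 ℝ (Fin 4)) : ρ ![e7 3, e7 5, e7 2, e7 0] = -ρ ![e7 0, e7 2, e7 3, e7 5] := by
  rw [sw12, sw01, sw23, sw12, sw01]; try ring
lemma canon_5023 (ρ : AlternatingMap ℝ E7 ℝ (Fin 4)) : ρ ![e7 5, e7 0, e7 2, e7 3] = -ρ ![e7 0, e7 2, e7 3, e7 5] := by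
  rw [sw01, sw12, sw23]; try ring
lemma canon_5032 (ρ : AlternatingMap ℝ E7 ℝ (Fin 4)) : ρ ![e7 5, e7 0, e7 3, e7 2] = ρ ![e7 0, e7 2, e7 3, e7 5] := by
  rw [sw01, sw12, sw23, sw12]; try ring
lemma canon_5203 (ρ : AlternatingMap ℝ E7 ℝ (Fin 4)) : ρ ![e7 5, e7 2, e7 0, e7 3] = ρ ![e7 0, e7 2, e7 3, e7 5] := by
  rw [sw01, sw12, sw01, sw23]; try ring
lemma canon_5230 (ρ : AlternatingMap ℝ E7 ℝ (Fin 4)) : ρ ![e7 5, e7 2, e7 3, e7 0] = -ρ ![e7 0, e7 2, e7 3, e7 5] := by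
  rw [sw01, sw12, sw23, sw12, sw01]; try ring
lemma canon_5302 (ρ : AlternatingMap ℝ E7 ℝ (Fin 4)) : ρ ![e7 5, e7 3, e7 0, e7 2] = -ρ ![e7 0, e7 2, e7 3, e7 5] := by
  rw [sw01, sw12, sw01, sw23, sw12]; try ring
lemma canon_5320 (ρ : AlternatingMap ℝ E7 ℝ (Fin 4)) : ρ ![e7 5, e7 3, e7 2, e7 0] = ρ ![e7 0, e7 2, e7 3, e7 5] := by
  rw [sw01, sw12, sw01, sw23, sw12, sw01]; try ring
lemma canon_0264 (ρ : AlternatingMap ℝ E7 ℝ (Fin 4)) : ρ ![e7 0, e7 2, e7 6, e7 4] = -ρ ![e7 0, e7 2, e7 4, e7 6] := by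
  rw [sw23]; try ring
lemma canon_0426 (ρ : AlternatingMap ℝ E7 ℝ (Fin 4)) : ρ ![e7 0, e7 4, e7 2, e7 6] = -ρ ![e7 0, e7 2, e7 4, e7 6] := by
  rw [sw12]; try ring
lemma canon_0462 (ρ : AlternatingMap ℝ E7 ℝ (Fin 4)) : ρ ![e7 0, e7 4, e7 6, e7 2] = ρ ![e7 0, e7 2, e7 4, e7 6] := by
  rw [sw23, sw12]; try ring
lemma canon_0624 (ρ : AlternatingMap ℝ E7 ℝ (Fin 4)) : ρ ![e7 0, e7 6, e7 2, e7 4] = ρ ![e7 0, e7 2, e7 4, e7 6] := by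
  rw [sw12, sw23]; try ring
lemma canon_0642 (ρ : AlternatingMap ℝ E7 ℝ (Fin 4)) : ρ ![e7 0, e7 6, e7 4, e7 2] = -ρ ![e7 0, e7 2, e7 4, e7 6] := by
  rw [sw12, sw23, sw12]; try ring
lemma canon_2046 (ρ : AlternatingMap ℝ E7 ℝ (Fin 4)) : ρ ![e7 2, e7 0, e7 4, e7 6] = -ρ ![e7 0, e7 2, e7 4, e7 6] := by
  rw [sw01]; try ring
lemma canon_2064 (ρ : AlternatingMap ℝ E7 ℝ (Fin 4)) : ρ ![e7 2, e7 0, e7 6, e7 4] = ρ ![e7 0, e7 2, e7 4, e7 6] := by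
  rw [sw01, sw23]; try ring
lemma canon_2406 (ρ : AlternatingMap ℝ E7 ℝ (Fin 4)) : ρ ![e7 2, e7 4, e7 0, e7 6] = ρ ![e7 0, e7 2, e7 4, e7 6] := by
  rw [sw12, sw01]; try ring
lemma canon_2460 (ρ : AlternatingMap ℝ E7 ℝ (Fin 4)) : ρ ![e7 2, e7 4, e7 6, e7 0] = -ρ ![e7 0, e7 2, e7 4, e7 6] := by
  rw [sw23, sw12, sw01]; try ring
lemma canon_2604 (ρ : AlternatingMap ℝ E7 ℝ (Fin 4)) : ρ ![e7 2, e7 6, e7 0, e7 4] = -ρ ![e7 0, e7 2, e7 4, e7 6] := by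
  rw [sw12, sw01, sw23]; try ring
lemma canon_2640 (ρ : AlternatingMap ℝ E7 ℝ (Fin 4)) : ρ ![e7 2, e7 6, e7 4, e7 0] = ρ ![e7 0, e7 2, e7 4, e7 6] := by
  rw [sw12, sw23, sw12, sw01]; try ring
lemma canon_4026 (ρ : AlternatingMap ℝ E7 ℝ (Fin 4)) : ρ ![e7 4, e7 0, e7 2, e7 6] = ρ ![e7 0, e7 2, e7 4, e7 6] := by
  rw [sw01, sw12]; try ring
lemma canon_4062 (ρ : AlternatingMap ℝ E7 ℝ (Fin 4)) : ρ ![e7 4, e7 0, e7 6, e7 2] = -ρ ![e7 0, e7 2, e7 4, e7 6] := by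
  rw [sw01, sw23, sw12]; try ring
lemma canon_4206 (ρ : AlternatingMap ℝ E7 ℝ (Fin 4)) : ρ ![e7 4, e7 2, e7 0, e7 6] = -ρ ![e7 0, e7 2, e7 4, e7 6] := by
  rw [sw01, sw12, sw01]; try ring
lemma canon_4260 (ρ : AlternatingMap ℝ E7 ℝ (Fin 4)) : ρ ![e7 4, e7 2, e7 6, e7 0] = ρ ![e7 0, e7 2, e7 4, e7 6] := by
  rw [sw01, sw23, sw12, sw01]; try ring
lemma canon_4602 (ρ : AlternatingMap ℝ E7 ℝ (Fin 4)) : ρ ![e7 4, e7 6, e7 0, e7 2] = ρ ![e7 0, e7 2, e7 4, e7 6] := by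
  rw [sw12, sw01, sw23, sw12]; try ring
lemma canon_4620 (ρ : AlternatingMap ℝ E7 ℝ (Fin 4)) : ρ ![e7 4, e7 6, e7 2, e7 0] = -ρ ![e7 0, e7 2, e7 4, e7 6] := by
  rw [sw12, sw01, sw23, sw12, sw01]; try ring
lemma canon_6024 (ρ : AlternatingMap ℝ E7 ℝ (Fin 4)) : ρ ![e7 6, e7 0, e7 2, e7 4] = -ρ ![e7 0, e7 2, e7 4, e7 6] := by
  rw [sw01, sw12, sw23]; try ring
lemma canon_6042 (ρ : AlternatingMap ℝ E7 ℝ (Fin 4)) : ρ ![e7 6, e7 0, e7 4, e7 2] = ρ ![e7 0, e7 2, e7 4, e7 6] := by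
  rw [sw01, sw12, sw23, sw12]; try ring
lemma canon_6204 (ρ : AlternatingMap ℝ E7 ℝ (Fin 4)) : ρ ![e7 6, e7 2, e7 0, e7 4] = ρ ![e7 0, e7 2, e7 4, e7 6] := by
  rw [sw01, sw12, sw01, sw23]; try ring
lemma canon_6240 (ρ : AlternatingMap ℝ E7 ℝ (Fin 4)) : ρ ![e7 6, e7 2, e7 4, e7 0] = -ρ ![e7 0, e7 2, e7 4, e7 6] := by
  rw [sw01, sw12, sw23, sw12, sw01]; try ring
lemma canon_6402 (ρ : AlternatingMap ℝ E7 ℝ (Fin 4)) : ρ ![e7 6, e7 4, e7 0, e7 2] = -ρ ![e7 0, e7 2, e7 4, e7 6] := by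
  rw [sw01, sw12, sw01, sw23, sw12]; try ring
lemma canon_6420 (ρ : AlternatingMap ℝ E7 ℝ (Fin 4)) : ρ ![e7 6, e7 4, e7 2, e7 0] = ρ ![e7 0, e7 2, e7 4, e7 6] := by
  rw [sw01, sw12, sw01, sw23, sw12, sw01]; try ring
lemma canon_0163 (ρ : AlternatingMap ℝ E7 ℝ (Fin 4)) : ρ ![e7 0, e7 1, e7 6, e7 3] = -ρ ![e7 0, e7 1, e7 3, e7 6] := by
  rw [sw23]; try ring
lemma canon_0316 (ρ : AlternatingMap ℝ E7 ℝ (Fin 4)) : ρ ![e7 0, e7 3, e7 1, e7 6] = -ρ ![e7 0, e7 1, e7 3, e7 6] := by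
  rw [sw12]; try ring
lemma canon_0361 (ρ : AlternatingMap ℝ E7 ℝ (Fin 4)) : ρ ![e7 0, e7 3, e7 6, e7 1] = ρ ![e7 0, e7 1, e7 3, e7 6] := by
  rw [sw23, sw12]; try ring
lemma canon_0613 (ρ : AlternatingMap ℝ E7 ℝ (Fin 4)) : ρ ![e7 0, e7 6, e7 1, e7 3] = ρ ![e7 0, e7 1, e7 3, e7 6] := by
  rw [sw12, sw23]; try ring
lemma canon_0631 (ρ : AlternatingMap ℝ E7 ℝ (Fin 4)) : ρ ![e7 0, e7 6, e7 3, e7 1] = -ρ ![e7 0, e7 1, e7 3, e7 6] := by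
  rw [sw12, sw23, sw12]; try ring
lemma canon_1036 (ρ : AlternatingMap ℝ E7 ℝ (Fin 4)) : ρ ![e7 1, e7 0, e7 3, e7 6] = -ρ ![e7 0, e7 1, e7 3, e7 6] := by
  rw [sw01]; try ring
lemma canon_1063 (ρ : AlternatingMap ℝ E7 ℝ (Fin 4)) : ρ ![e7 1, e7 0, e7 6, e7 3] = ρ ![e7 0, e7 1, e7 3, e7 6] := by
  rw [sw01, sw23]; try ring
lemma canon_1306 (ρ : AlternatingMap ℝ E7 ℝ (Fin 4)) : ρ ![e7 1, e7 3, e7 0, e7 6] = ρ ![e7 0, e7 1, e7 3, e7 6] := by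
  rw [sw12, sw01]; try ring
lemma canon_1360 (ρ : AlternatingMap ℝ E7 ℝ (Fin 4)) : ρ ![e7 1, e7 3, e7 6, e7 0] = -ρ ![e7 0, e7 1, e7 3, e7 6] := by
  rw [sw23, sw12, sw01]; try ring
lemma canon_1603 (ρ : AlternatingMap ℝ E7 ℝ (Fin 4)) : ρ ![e7 1, e7 6, e7 0, e7 3] = -ρ ![e7 0, e7 1, e7 3, e7 6] := by
  rw [sw12, sw01, sw23]; try ring
lemma canon_1630 (ρ : AlternatingMap ℝ E7 ℝ (Fin 4)) : ρ ![e7 1, e7 6, e7 3, e7 0] = ρ ![e7 0, e7 1, e7 3, e7 6] := by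
  rw [sw12, sw23, sw12, sw01]; try ring
lemma canon_3016 (ρ : AlternatingMap ℝ E7 ℝ (Fin 4)) : ρ ![e7 3, e7 0, e7 1, e7 6] = ρ ![e7 0, e7 1, e7 3, e7 6] := by
  rw [sw01, sw12]; try ring
lemma canon_3061 (ρ : AlternatingMap ℝ E7 ℝ (Fin 4)) : ρ ![e7 3, e7 0, e7 6, e7 1] = -ρ ![e7 0, e7 1, e7 3, e7 6] := by
  rw [sw01, sw23, sw12]; try ring
lemma canon_3106 (ρ : AlternatingMap ℝ E7 ℝ (Fin 4)) : ρ ![e7 3, e7 1, e7 0, e7 6] = -ρ ![e7 0, e7 1, e7 3, e7 6] := by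
  rw [sw01, sw12, sw01]; try ring
lemma canon_3160 (ρ : AlternatingMap ℝ E7 ℝ (Fin 4)) : ρ ![e7 3, e7 1, e7 6, e7 0] = ρ ![e7 0, e7 1, e7 3, e7 6] := by
  rw [sw01, sw23, sw12, sw01]; try ring
lemma canon_3601 (ρ : AlternatingMap ℝ E7 ℝ (Fin 4)) : ρ ![e7 3, e7 6, e7 0, e7 1] = ρ ![e7 0, e7 1, e7 3, e7 6] := by
  rw [sw12, sw01, sw23, sw12]; try ring
lemma canon_3610 (ρ : AlternatingMap ℝ E7 ℝ (Fin 4)) : ρ ![e7 3, e7 6, e7 1, e7 0] = -ρ ![e7 0, e7 1, e7 3, e7 6] := by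
  rw [sw12, sw01, sw23, sw12, sw01]; try ring
lemma canon_6013 (ρ : AlternatingMap ℝ E7 ℝ (Fin 4)) : ρ ![e7 6, e7 0, e7 1, e7 3] = -ρ ![e7 0, e7 1, e7 3, e7 6] := by
  rw [sw01, sw12, sw23]; try ring
lemma canon_6031 (ρ : AlternatingMap ℝ E7 ℝ (Fin 4)) : ρ ![e7 6, e7 0, e7 3, e7 1] = ρ ![e7 0, e7 1, e7 3, e7 6] := by
  rw [sw01, sw12, sw23, sw12]; try ring
lemma canon_6103 (ρ : AlternatingMap ℝ E7 ℝ (Fin 4)) : ρ ![e7 6, e7 1, e7 0, e7 3] = ρ ![e7 0, e7 1, e7 3, e7 6] := by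
  rw [sw01, sw12, sw01, sw23]; try ring
lemma canon_6130 (ρ : AlternatingMap ℝ E7 ℝ (Fin 4)) : ρ ![e7 6, e7 1, e7 3, e7 0] = -ρ ![e7 0, e7 1, e7 3, e7 6] := by
  rw [sw01, sw12, sw23, sw12, sw01]; try ring
lemma canon_6301 (ρ : AlternatingMap ℝ E7 ℝ (Fin 4)) : ρ ![e7 6, e7 3, e7 0, e7 1] = -ρ ![e7 0, e7 1, e7 3, e7 6] := by
  rw [sw01, sw12, sw01, sw23, sw12]; try ring
lemma canon_6310 (ρ : AlternatingMap ℝ E7 ℝ (Fin 4)) : ρ ![e7 6, e7 3, e7 1, e7 0] = ρ ![e7 0, e7 1, e7 3, e7 6] := by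
  rw [sw01, sw12, sw01, sw23, sw12, sw01]; try ring
lemma canon_0154 (ρ : AlternatingMap ℝ E7 ℝ (Fin 4)) : ρ ![e7 0, e7 1, e7 5, e7 4] = -ρ ![e7 0, e7 1, e7 4, e7 5] := by
  rw [sw23]; try ring
lemma canon_0415 (ρ : AlternatingMap ℝ E7 ℝ (Fin 4)) : ρ ![e7 0, e7 4, e7 1, e7 5] = -ρ ![e7 0, e7 1, e7 4, e7 5] := by
  rw [sw12]; try ring
lemma canon_0451 (ρ : AlternatingMap ℝ E7 ℝ (Fin 4)) : ρ ![e7 0, e7 4, e7 5, e7 1] = ρ ![e7 0, e7 1, e7 4, e7 5] := by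
  rw [sw23, sw12]; try ring
lemma canon_0514 (ρ : AlternatingMap ℝ E7 ℝ (Fin 4)) : ρ ![e7 0, e7 5, e7 1, e7 4] = ρ ![e7 0, e7 1, e7 4, e7 5] := by
  rw [sw12, sw23]; try ring
lemma canon_0541 (ρ : AlternatingMap ℝ E7 ℝ (Fin 4)) : ρ ![e7 0, e7 5, e7 4, e7 1] = -ρ ![e7 0, e7 1, e7 4, e7 5] := by
  rw [sw12, sw23, sw12]; try ring
lemma canon_1045 (ρ : AlternatingMap ℝ E7 ℝ (Fin 4)) : ρ ![e7 1, e7 0, e7 4, e7 5] = -ρ ![e7 0, e7 1, e7 4, e7 5] := by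
  rw [sw01]; try ring
lemma canon_1054 (ρ : AlternatingMap ℝ E7 ℝ (Fin 4)) : ρ ![e7 1, e7 0, e7 5, e7 4] = ρ ![e7 0, e7 1, e7 4, e7 5] := by
  rw [sw01, sw23]; try ring
lemma canon_1405 (ρ : AlternatingMap ℝ E7 ℝ (Fin 4)) : ρ ![e7 1, e7 4, e7 0, e7 5] = ρ ![e7 0, e7 1, e7 4, e7 5] := by
  rw [sw12, sw01]; try ring
lemma canon_1450 (ρ : AlternatingMap ℝ E7 ℝ (Fin 4)) : ρ ![e7 1, e7 4, e7 5, e7 0] = -ρ ![e7 0, e7 1, e7 4, e7 5] := by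
  rw [sw23, sw12, sw01]; try ring
lemma canon_1504 (ρ : AlternatingMap ℝ E7 ℝ (Fin 4)) : ρ ![e7 1, e7 5, e7 0, e7 4] = -ρ ![e7 0, e7 1, e7 4, e7 5] := by
  rw [sw12, sw01, sw23]; try ring
lemma canon_1540 (ρ : AlternatingMap ℝ E7 ℝ (Fin 4)) : ρ ![e7 1, e7 5, e7 4, e7 0] = ρ ![e7 0, e7 1, e7 4, e7 5] := by
  rw [sw12, sw23, sw12, sw01]; try ring
lemma canon_4015 (ρ : AlternatingMap ℝ E7 ℝ (Fin 4)) : ρ ![e7 4, e7 0, e7 1, e7 5] = ρ ![e7 0, e7 1, e7 4, e7 5] := by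
  rw [sw01, sw12]; try ring
lemma canon_4051 (ρ : AlternatingMap ℝ E7 ℝ (Fin 4)) : ρ ![e7 4, e7 0, e7 5, e7 1] = -ρ ![e7 0, e7 1, e7 4, e7 5] := by
  rw [sw01, sw23, sw12]; try ring
lemma canon_4105 (ρ : AlternatingMap ℝ E7 ℝ (Fin 4)) : ρ ![e7 4, e7 1, e7 0, e7 5] = -ρ ![e7 0, e7 1, e7 4, e7 5] := by
  rw [sw01, sw12, sw01]; try ring
lemma canon_4150 (ρ : AlternatingMap ℝ E7 ℝ (Fin 4)) : ρ ![e7 4, e7 1, e7 5, e7 0] = ρ ![e7 0, e7 1, e7 4, e7 5] := by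
  rw [sw01, sw23, sw12, sw01]; try ring
lemma canon_4501 (ρ : AlternatingMap ℝ E7 ℝ (Fin 4)) : ρ ![e7 4, e7 5, e7 0, e7 1] = ρ ![e7 0, e7 1, e7 4, e7 5] := by
  rw [sw12, sw01, sw23, sw12]; try ring
lemma canon_4510 (ρ : AlternatingMap ℝ E7 ℝ (Fin 4)) : ρ ![e7 4, e7 5, e7 1, e7 0] = -ρ ![e7 0, e7 1, e7 4, e7 5] := by
  rw [sw12, sw01, sw23, sw12, sw01]; try ring
lemma canon_5014 (ρ : AlternatingMap ℝ E7 ℝ (Fin 4)) : ρ ![e7 5, e7 0, e7 1, e7 4] = -ρ ![e7 0, e7 1, e7 4, e7 5] := by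
  rw [sw01, sw12, sw23]; try ring
lemma canon_5041 (ρ : AlternatingMap ℝ E7 ℝ (Fin 4)) : ρ ![e7 5, e7 0, e7 4, e7 1] = ρ ![e7 0, e7 1, e7 4, e7 5] := by
  rw [sw01, sw12, sw23, sw12]; try ring
lemma canon_5104 (ρ : AlternatingMap ℝ E7 ℝ (Fin 4)) : ρ ![e7 5, e7 1, e7 0, e7 4] = ρ ![e7 0, e7 1, e7 4, e7 5] := by
  rw [sw01, sw12, sw01, sw23]; try ring
lemma canon_5140 (ρ : AlternatingMap ℝ E7 ℝ (Fin 4)) : ρ ![e7 5, e7 1, e7 4, e7 0] = -ρ ![e7 0, e7 1, e7 4, e7 5] := by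
  rw [sw01, sw12, sw23, sw12, sw01]; try ring
lemma canon_5401 (ρ : AlternatingMap ℝ E7 ℝ (Fin 4)) : ρ ![e7 5, e7 4, e7 0, e7 1] = -ρ ![e7 0, e7 1, e7 4, e7 5] := by
  rw [sw01, sw12, sw01, sw23, sw12]; try ring
lemma canon_5410 (ρ : AlternatingMap ℝ E7 ℝ (Fin 4)) : ρ ![e7 5, e7 4, e7 1, e7 0] = ρ ![e7 0, e7 1, e7 4, e7 5] := by
  rw [sw01, sw12, sw01, sw23, sw12, sw01]; try ring
lemma rhoHatD0 (ρ : AlternatingMap ℝ E7 ℝ (Fin 4)) : rhoHat ρ 0 0 =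
    ρ ![e7 0, e7 2, e7 3, e7 5] - ρ ![e7 0, e7 2, e7 5, e7 3] - ρ ![e7 0, e7 3, e7 2, e7 5] + ρ ![e7 0, e7 3, e7 5, e7 2] + ρ ![e7 0, e7 5, e7 2, e7 3] - ρ ![e7 0, e7 5, e7 3, e7 2] - ρ ![e7 0, e7 2, e7 6, e7 4] + ρ ![e7 0, e7 2, e7 4, e7 6] + ρ ![e7 0, e7 6, e7 2, e7 4] - ρ ![e7 0, e7 6, e7 4, e7 2] - ρ ![e7 0, e7 4, e7 2, e7 6] + ρ ![e7 0, e7 4, e7 6, e7 2] - ρ ![e7 0, e7 1, e7 3, e7 6] + ρ ![e7 0, e7 1, e7 6, e7 3] + ρ ![e7 0, e7 3, e7 1, e7 6] - ρ ![e7 0, e7 3, e7 6, e7 1] - ρ ![e7 0, e7 6, e7 1, e7 3] + ρ ![e7 0, e7 6, e7 3, e7 1] + ρ ![e7 0, e7 1, e7 4, e7 5] - ρ ![e7 0, e7 1, e7 5, e7 4] - ρ ![e7 0, e7 4, e7 1, e7 5] + ρ ![e7 0, e7 4, e7 5, e7 1] + ρ ![e7 0, e7 5, e7 1, e7 4] -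 ρ ![e7 0, e7 5, e7 4, e7 1] := by
  rw [rhoHat]
  simp only [psiC, quad_expand, kd7_00, kd7_01, kd7_02, kd7_03, kd7_04, kd7_05, kd7_06, kd7_10, kd7_11, kd7_12, kd7_13, kd7_14, kd7_15, kd7_16, kd7_20, kd7_21, kd7_22, kd7_23, kd7_24, kd7_25, kd7_26, kd7_30, kd7_31, kd7_32, kd7_33, kd7_34, kd7_35, kd7_36, kd7_40, kd7_41, kd7_42, kd7_43, kd7_44, kd7_45, kd7_46, kd7_50, kd7_51, kd7_52, kd7_53, kd7_54, kd7_55, kd7_56, kd7_60, kd7_61, kd7_62, kd7_63, kd7_64, kd7_65, kd7_66]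
  simp only [one_mul, zero_mul, mul_zero, mul_one, neg_mul, mul_neg, sub_zero, zero_sub,
    add_zero, zero_add, neg_neg, mul_sub, mul_add, Finset.sum_sub_distrib, Finset.sum_add_distrib,
    Finset.sum_neg_distrib, collapse3]
  ring
lemma rhoHatD1 (ρ : AlternatingMap ℝ E7 ℝ (Fin 4)) : rhoHat ρ 1 1 =
    -ρ ![e7 1, e7 2, e7 3, e7 4] + ρ ![e7 1, e7 2, e7 4, e7 3] + ρ ![e7 1, e7 3, e7 2, e7 4] - ρ ![e7 1, e7 3, e7 4, e7 2] - ρ ![e7 1, e7 4, e7 2, e7 3] + ρ ![e7 1, e7 4, e7 3, e7 2] + ρ ![e7 1, e7 2, e7 5, e7 6] - ρ ![e7 1, e7 2, e7 6, e7 5] - ρ ![e7 1, e7 5, e7 2, e7 6] + ρ ![e7 1, e7 5, e7 6, e7 2] + ρ ![e7 1, e7 6, e7 2, e7 5] - ρ ![e7 1, e7 6, e7 5, e7 2] + ρ ![e7 1, e7 0, e7 3, e7 6] - ρ ![e7 1, e7 0, e7 6, e7 3] - ρ ![e7 1, e7 3, e7 0, e7 6] + ρ ![e7 1, e7 3, e7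 6, e7 0] + ρ ![e7 1, e7 6, e7 0, e7 3] - ρ ![e7 1, e7 6, e7 3, e7 0] - ρ ![e7 1, e7 0, e7 4, e7 5] + ρ ![e7 1, e7 0, e7 5, e7 4] + ρ ![e7 1, e7 4, e7 0, e7 5] - ρ ![e7 1, e7 4, e7 5, e7 0] - ρ ![e7 1, e7 5, e7 0, e7 4] + ρ ![e7 1, e7 5, e7 4, e7 0] := by
  rw [rhoHat]
  simp only [psiC, quad_expand, kd7_00, kd7_01, kd7_02, kd7_03, kd7_04, kd7_05, kd7_06, kd7_10, kd7_11, kd7_12, kd7_13, kd7_14, kd7_15, kd7_16, kd7_20, kd7_21, kd7_22, kd7_23, kd7_24, kd7_25, kd7_26, kd7_30, kd7_31, kd7_32, kd7_33, kd7_34, kd7_35, kd7_36, kd7_40, kd7_41, kd7_42, kd7_43, kd7_44, kd7_45, kd7_46, kd7_50, kd7_51, kd7_52, kd7_53, kd7_54, kd7_55, kd7_56, kd7_60, kd7_61, kd7_62, kd7_63, kd7_64, kd7_65, kd7_66]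
  simp only [one_mul, zero_mul, mul_zero, mul_one, neg_mul, mul_neg, sub_zero, zero_sub,
    add_zero, zero_add, neg_neg, mul_sub, mul_add, Finset.sum_sub_distrib, Finset.sum_add_distrib,
    Finset.sum_neg_distrib, collapse3]
  ring
lemma rhoHatD2 (ρ : AlternatingMap ℝ E7 ℝ (Fin 4)) : rhoHat ρ 2 2 =
    ρ ![e7 2, e7 1, e7 3, e7 4] - ρ ![e7 2, e7 1, e7 4, e7 3] - ρ ![e7 2, e7 3, e7 1, e7 4] + ρ ![e7 2, e7 3, e7 4, e7 1] + ρ ![e7 2, e7 4, e7 1, e7 3] - ρ ![e7 2, e7 4, e7 3, e7 1] - ρ ![e7 2, e7 1, e7 5, e7 6] + ρ ![e7 2, e7 1, e7 6, e7 5] + ρ ![e7 2, e7 5, e7 1, e7 6] - ρ ![e7 2, e7 5, e7 6, e7 1] - ρ ![e7 2, e7 6, e7 1, e7 5] + ρ ![e7 2, e7 6, e7 5, e7 1] - ρ ![e7 2, e7 0, e7 3, e7 5] + ρ ![e7 2, e7 0, e7 5, e7 3] + ρ ![e7 2, e7 3, e7 0, e7 5] - ρ ![e7 2, e7 3, e7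 5, e7 0] - ρ ![e7 2, e7 5, e7 0, e7 3] + ρ ![e7 2, e7 5, e7 3, e7 0] + ρ ![e7 2, e7 0, e7 6, e7 4] - ρ ![e7 2, e7 0, e7 4, e7 6] - ρ ![e7 2, e7 6, e7 0, e7 4] + ρ ![e7 2, e7 6, e7 4, e7 0] + ρ ![e7 2, e7 4, e7 0, e7 6] - ρ ![e7 2, e7 4, e7 6, e7 0] := by
  rw [rhoHat]
  simp only [psiC, quad_expand, kd7_00, kd7_01, kd7_02, kd7_03, kd7_04, kd7_05, kd7_06, kd7_10, kd7_11, kd7_12, kd7_13, kd7_14, kd7_15, kd7_16, kd7_20, kd7_21, kd7_22, kd7_23, kd7_24, kd7_25, kd7_26, kd7_30, kd7_31, kd7_32, kd7_33, kd7_34, kd7_35, kd7_36, kd7_40, kd7_41, kd7_42, kd7_43, kd7_44, kd7_45, kd7_46, kd7_50, kd7_51, kd7_52, kd7_53, kd7_54, kd7_55, kd7_56, kd7_60, kd7_61, kd7_62, kd7_63, kd7_64, kd7_65, kd7_66]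
  simp only [one_mul, zero_mul, mul_zero, mul_one, neg_mul, mul_neg, sub_zero, zero_sub,
    add_zero, zero_add, neg_neg, mul_sub, mul_add, Finset.sum_sub_distrib, Finset.sum_add_distrib,
    Finset.sum_neg_distrib, collapse3]
  ring
lemma rhoHatD3 (ρ : AlternatingMap ℝ E7 ℝ (Fin 4)) : rhoHat ρ 3 3 =
    ρ ![e7 3, e7 4, e7 5, e7 6] - ρ ![e7 3, e7 4, e7 6, e7 5] - ρ ![e7 3, e7 5, e7 4, e7 6] + ρ ![e7 3, e7 5, e7 6, e7 4] + ρ ![e7 3, e7 6, e7 4, e7 5] - ρ ![e7 3, e7 6, e7 5, e7 4] - ρ ![e7 3, e7 1, e7 2, e7 4] + ρ ![e7 3, e7 1, e7 4, e7 2] + ρ ![e7 3, e7 2, e7 1, e7 4] - ρ ![e7 3, e7 2, e7 4, e7 1] - ρ ![e7 3, e7 4, e7 1, e7 2] + ρ ![e7 3, e7 4, e7 2, e7 1] - ρ ![e7 3, e7 2, e7 0, e7 5] + ρ ![e7 3, e7 2, e7 5, e7 0] + ρ ![e7 3, e7 0, e7 2, e7 5] - ρ ![e7 3, e7 0, e7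 5, e7 2] - ρ ![e7 3, e7 5, e7 2, e7 0] + ρ ![e7 3, e7 5, e7 0, e7 2] - ρ ![e7 3, e7 0, e7 1, e7 6] + ρ ![e7 3, e7 0, e7 6, e7 1] + ρ ![e7 3, e7 1, e7 0, e7 6] - ρ ![e7 3, e7 1, e7 6, e7 0] - ρ ![e7 3, e7 6, e7 0, e7 1] + ρ ![e7 3, e7 6, e7 1, e7 0] := by
  rw [rhoHat]
  simp only [psiC, quad_expand, kd7_00, kd7_01, kd7_02, kd7_03, kd7_04, kd7_05, kd7_06, kd7_10, kd7_11, kd7_12, kd7_13, kd7_14, kd7_15, kd7_16, kd7_20, kd7_21, kd7_22, kd7_23, kd7_24, kd7_25, kd7_26, kd7_30, kd7_31, kd7_32, kd7_33, kd7_34, kd7_35, kd7_36, kd7_40, kd7_41, kd7_42, kd7_43, kd7_44, kd7_45, kd7_46, kd7_50, kd7_51, kd7_52, kd7_53, kd7_54, kd7_55, kd7_56, kd7_60, kd7_61, kd7_62, kd7_63, kd7_64, kd7_65, kd7_66]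
  simp only [one_mul, zero_mul, mul_zero, mul_one, neg_mul, mul_neg, sub_zero, zero_sub,
    add_zero, zero_add, neg_neg, mul_sub, mul_add, Finset.sum_sub_distrib, Finset.sum_add_distrib,
    Finset.sum_neg_distrib, collapse3]
  ring
lemma rhoHatD4 (ρ : AlternatingMap ℝ E7 ℝ (Fin 4)) : rhoHat ρ 4 4 =
    -ρ ![e7 4, e7 3, e7 5, e7 6] + ρ ![e7 4, e7 3, e7 6, e7 5] + ρ ![e7 4, e7 5, e7 3, e7 6] - ρ ![e7 4, e7 5, e7 6, e7 3] - ρ ![e7 4, e7 6, e7 3, e7 5] + ρ ![e7 4, e7 6, e7 5, e7 3] + ρ ![e7 4, e7 1, e7 2, e7 3] - ρ ![e7 4, e7 1, e7 3, e7 2] - ρ ![e7 4, e7 2, e7 1, e7 3] + ρ ![e7 4, e7 2, e7 3, e7 1] + ρ ![e7 4, e7 3, e7 1, e7 2] - ρ ![e7 4, e7 3, e7 2, e7 1] - ρ ![e7 4, e7 2, e7 0, e7 6] + ρ ![e7 4, e7 2, e7 6, e7 0] + ρ ![e7 4, e7 0, e7 2, e7 6] - ρ ![e7 4, e7 0, e7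 6, e7 2] - ρ ![e7 4, e7 6, e7 2, e7 0] + ρ ![e7 4, e7 6, e7 0, e7 2] + ρ ![e7 4, e7 0, e7 1, e7 5] - ρ ![e7 4, e7 0, e7 5, e7 1] - ρ ![e7 4, e7 1, e7 0, e7 5] + ρ ![e7 4, e7 1, e7 5, e7 0] + ρ ![e7 4, e7 5, e7 0, e7 1] - ρ ![e7 4, e7 5, e7 1, e7 0] := by
  rw [rhoHat]
  simp only [psiC, quad_expand, kd7_00, kd7_01, kd7_02, kd7_03, kd7_04, kd7_05, kd7_06, kd7_10, kd7_11, kd7_12, kd7_13, kd7_14, kd7_15, kd7_16, kd7_20, kd7_21, kd7_22, kd7_23, kd7_24, kd7_25, kd7_26, kd7_30, kd7_31, kd7_32, kd7_33, kd7_34, kd7_35, kd7_36, kd7_40, kd7_41, kd7_42, kd7_43, kd7_44, kd7_45, kd7_46, kd7_50, kd7_51, kd7_52, kd7_53, kd7_54, kd7_55, kd7_56, kd7_60, kd7_61, kd7_62, kd7_63, kd7_64, kd7_65, kd7_66]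
  simp only [one_mul, zero_mul, mul_zero, mul_one, neg_mul, mul_neg, sub_zero, zero_sub,
    add_zero, zero_add, neg_neg, mul_sub, mul_add, Finset.sum_sub_distrib, Finset.sum_add_distrib,
    Finset.sum_neg_distrib, collapse3]
  ring
lemma rhoHatD5 (ρ : AlternatingMap ℝ E7 ℝ (Fin 4)) : rhoHat ρ 5 5 =
    ρ ![e7 5, e7 3, e7 4, e7 6] - ρ ![e7 5, e7 3, e7 6, e7 4] - ρ ![e7 5, e7 4, e7 3, e7 6] + ρ ![e7 5, e7 4, e7 6, e7 3] + ρ ![e7 5, e7 6, e7 3, e7 4] - ρ ![e7 5, e7 6, e7 4, e7 3] + ρ ![e7 5, e7 1, e7 2, e7 6] - ρ ![e7 5, e7 1, e7 6, e7 2] - ρ ![e7 5, e7 2, e7 1, e7 6] + ρ ![e7 5, e7 2, e7 6, e7 1] + ρ ![e7 5, e7 6, e7 1, e7 2] - ρ ![e7 5, e7 6, e7 2, e7 1] + ρ ![e7 5, e7 2, e7 0, e7 3] - ρ ![e7 5, e7 2, e7 3, e7 0] - ρ ![e7 5, e7 0, e7 2, e7 3] + ρ ![e7 5, e7 0, e7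 3, e7 2] + ρ ![e7 5, e7 3, e7 2, e7 0] - ρ ![e7 5, e7 3, e7 0, e7 2] - ρ ![e7 5, e7 0, e7 1, e7 4] + ρ ![e7 5, e7 0, e7 4, e7 1] + ρ ![e7 5, e7 1, e7 0, e7 4] - ρ ![e7 5, e7 1, e7 4, e7 0] - ρ ![e7 5, e7 4, e7 0, e7 1] + ρ ![e7 5, e7 4, e7 1, e7 0] := by
  rw [rhoHat]
  simp only [psiC, quad_expand, kd7_00, kd7_01, kd7_02, kd7_03, kd7_04, kd7_05, kd7_06, kd7_10, kd7_11, kd7_12, kd7_13, kd7_14, kd7_15, kd7_16, kd7_20, kd7_21, kd7_22, kd7_23, kd7_24, kd7_25, kd7_26, kd7_30, kd7_31, kd7_32, kd7_33, kd7_34, kd7_35, kd7_36, kd7_40, kd7_41, kd7_42, kd7_43, kd7_44, kd7_45, kd7_46, kd7_50, kd7_51, kd7_52, kd7_53, kd7_54, kd7_55, kd7_56, kd7_60, kd7_61, kd7_62, kd7_63, kd7_64, kd7_65, kd7_66]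
  simp only [one_mul, zero_mul, mul_zero, mul_one, neg_mul, mul_neg, sub_zero, zero_sub,
    add_zero, zero_add, neg_neg, mul_sub, mul_add, Finset.sum_sub_distrib, Finset.sum_add_distrib,
    Finset.sum_neg_distrib, collapse3]
  ring
lemma rhoHatD6 (ρ : AlternatingMap ℝ E7 ℝ (Fin 4)) : rhoHat ρ 6 6 =
    -ρ ![e7 6, e7 3, e7 4, e7 5] + ρ ![e7 6, e7 3, e7 5, e7 4] + ρ ![e7 6, e7 4, e7 3, e7 5] - ρ ![e7 6, e7 4, e7 5, e7 3] - ρ ![e7 6, e7 5, e7 3, e7 4] + ρ ![e7 6, e7 5, e7 4, e7 3] - ρ ![e7 6, e7 1, e7 2, e7 5] + ρ ![e7 6, e7 1, e7 5, e7 2] + ρ ![e7 6, e7 2, e7 1, e7 5] - ρ ![e7 6, e7 2, e7 5, e7 1] - ρ ![e7 6, e7 5, e7 1, e7 2] + ρ ![e7 6, e7 5, e7 2, e7 1] + ρ ![e7 6, e7 2, e7 0, e7 4] - ρ ![e7 6, e7 2, e7 4, e7 0] - ρ ![e7 6, e7 0, e7 2, e7 4] + ρ ![e7 6, e7 0, e7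 4, e7 2] + ρ ![e7 6, e7 4, e7 2, e7 0] - ρ ![e7 6, e7 4, e7 0, e7 2] + ρ ![e7 6, e7 0, e7 1, e7 3] - ρ ![e7 6, e7 0, e7 3, e7 1] - ρ ![e7 6, e7 1, e7 0, e7 3] + ρ ![e7 6, e7 1, e7 3, e7 0] + ρ ![e7 6, e7 3, e7 0, e7 1] - ρ ![e7 6, e7 3, e7 1, e7 0] := by
  rw [rhoHat]
  simp only [psiC, quad_expand, kd7_00, kd7_01, kd7_02, kd7_03, kd7_04, kd7_05, kd7_06, kd7_10, kd7_11, kd7_12, kd7_13, kd7_14, kd7_15, kd7_16, kd7_20, kd7_21, kd7_22, kd7_23, kd7_24, kd7_25, kd7_26, kd7_30, kd7_31, kd7_32, kd7_33, kd7_34, kd7_35, kd7_36, kd7_40, kd7_41, kd7_42, kd7_43, kd7_44, kd7_45, kd7_46, kd7_50, kd7_51, kd7_52, kd7_53, kd7_54, kd7_55, kd7_56, kd7_60, kd7_61, kd7_62, kd7_63, kd7_64, kd7_65, kd7_66]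
  simp only [one_mul, zero_mul, mul_zero, mul_one, neg_mul, mul_neg, sub_zero, zero_sub,
    add_zero, zero_add, neg_neg, mul_sub, mul_add, Finset.sum_sub_distrib, Finset.sum_add_distrib,
    Finset.sum_neg_distrib, collapse3]
  ring

/-- Key trace identity in the proof of Theorem 2.18: the tangential trace of `h`
over the standard coassociative 4-plane `span{e₄,e₅,e₆,e₇}` equals `2 ρ₄₅₆₇`. -/
theorem trace_identity_coassoc (ρ : AlternatingMap ℝ E7 ℝ (Fin 4)) :
    hRho ρ 3 3 + hRho ρ 4 4 + hRho ρ 5 5 + hRho ρ 6 6 =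
      2 * ρ ![e7 3, e7 4, e7 5, e7 6] := by
  simp only [hRho, Fin.sum_univ_seven]
  rw [rhoHatD0 ρ, rhoHatD1 ρ, rhoHatD2 ρ, rhoHatD3 ρ, rhoHatD4 ρ, rhoHatD5 ρ, rhoHatD6 ρ]
  simp only [canon_3465, canon_3546, canon_3564, canon_3645, canon_3654, canon_4356, canon_4365, canon_4536, canon_4563, canon_4635, canon_4653, canon_5346, canon_5364, canon_5436, canon_5463, canon_5634, canon_5643, canon_6345, canon_6354, canon_6435, canon_6453, canon_6534, canon_6543, canon_1243, canon_1324, canon_1342, canon_1423, canon_1432, canon_2134, canon_2143, canon_2314, canon_2341, canon_2413, canon_2431, canon_3124, canon_3142, canon_3214, canon_3241, canon_3412, canon_3421, canon_4123, canon_4132, canon_4213, canon_4231, canon_4312, canon_4321, canon_1265, canon_1526, canon_1562, canon_1625, canon_1652, canon_2156, canon_2165, canon_2516, canon_2561, canon_2615, canon_2651, canon_5126, canon_5162, canon_5216, canon_5261, canon_5612, canon_5621, canon_6125, canon_6152, canon_6215, canon_6251, canon_6512, canon_6521, canon_0253, canon_0325, canon_0352, canon_0523, canon_0532, canon_2035,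 canon_2053, canon_2305, canon_2350, canon_2503, canon_2530, canon_3025, canon_3052, canon_3205, canon_3250, canon_3502, canon_3520, canon_5023, canon_5032, canon_5203, canon_5230, canon_5302, canon_5320, canon_0264, canon_0426, canon_0462, canon_0624, canon_0642, canon_2046, canon_2064, canon_2406, canon_2460, canon_2604, canon_2640, canon_4026, canon_4062, canon_4206, canon_4260, canon_4602, canon_4620, canon_6024, canon_6042, canon_6204, canon_6240, canon_6402, canon_6420, canon_0163, canon_0316, canon_0361, canon_0613, canon_0631, canon_1036, canon_1063, canon_1306, canon_1360, canon_1603, canon_1630, canon_3016, canon_3061, canon_3106, canon_3160, canon_3601, canon_3610, canon_6013, canon_6031, canon_6103, canon_6130, canon_6301, canon_6310, canon_0154, canon_0415, canon_0451, canon_0514, canon_0541, canon_1045, canon_1054, canon_1405, canon_1450, canon_1504, canon_1540, canon_4015, canon_4051, canon_4105, canon_4150, canon_4501, canon_4510, canon_5014, canon_5041, canon_5104, canon_5140, canon_5401, canon_5410]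
  rw [kd7_33, kd7_44, kd7_55, kd7_66]
  ring
end
end
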